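/- arXiv:1403.7886 — 6 statements merged into one kernel-verified Lean document; each statement's English description precedes it below -/
import Mathlib

section
/- Let μ be a mixed stopping time on (Ω,F,P) with filtration (F_t)_{t∈[0,T]}. Then the push-forward measure δ_μ of P ⊗ λ under (ω,r) ↦ (ω,μ(ω,r)) is a distribution stopping time: its marginal on Ω equals P, and for every t ∈ [0,T] the Radon–Nikodym derivative of A ↦ δ_μ(A × [0,t]) with respect to P is F_t-measurable. -/
open MeasureTheory Set

noncomputable section

namespace StopEquiv

variable {Ω : Type*} [MeasurableSpace Ω]

/-- Lebesgue measure on the unit interval `[0,1]`, as a measure on `ℝ`. -/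
def lam : Measure ℝ := volume.restrict (Icc (0:ℝ) 1)

/-- The filtration `F` on the time interval `[0,T]` satisfies the usual conditions
(together with monotonicity and being a sub-σ-algebra of the ambient one):
right continuity and `F 0` containing all `P`-null sets. -/
def UsualConditions (P : Measure Ω) (F : ℝ → MeasurableSpace Ω) (T : ℝ) : Prop :=
  (∀ s t : ℝ, s ≤ t → F s ≤ F t) ∧
  (∀ t : ℝ, F t ≤ (inferInstance : MeasurableSpace Ω)) ∧
  (∀ t ∈ Ico (0:ℝ) T, F t = ⨅ s ∈ Ioc t T, F s) ∧
  (∀ N : Set Ω, (∃ M, MeasurableSet M ∧ N ⊆ M ∧ P M = 0) → MeasurableSet[F 0] N)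

/-- A pure stopping time with values in `[0,T]`. -/
def IsPureST (F : ℝ → MeasurableSpace Ω) (T : ℝ) (σ : Ω → ℝ) : Prop :=
  (∀ ω, σ ω ∈ Icc 0 T) ∧ ∀ t ∈ Icc (0:ℝ) T, MeasurableSet[F t] {ω | σ ω ≤ t}

/-- A mixed stopping time (Definition of Baxter–Chacon): `{(ω,r) : μ(ω,r) ≤ t}` is
`F_t ⊗ B(ℝ)`-measurable for every `t ∈ [0,T]`. -/
def IsMixedST (F : ℝ → MeasurableSpace Ω) (T : ℝ) (μ : Ω → ℝ → ℝ) : Prop :=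
  (∀ ω r, μ ω r ∈ Icc 0 T) ∧
  ∀ t ∈ Icc (0:ℝ) T,
    MeasurableSet[(F t).prod (borel ℝ)] {p : Ω × ℝ | μ p.1 p.2 ≤ t}

/-- The distribution stopping time `δ_μ` induced by a mixed stopping time: the
push-forward of `P ⊗ λ` under `(ω,r) ↦ (ω, μ(ω,r))`. -/

instance lam_prob : IsProbabilityMeasure lam := by
  constructor
  simp [lam, Real.volume_Icc]

lemma prod_le_ambient {Ω : Type*} [mΩ : MeasurableSpace Ω]
    (m : MeasurableSpace Ω) (hm : m ≤ mΩ) {s : Set (Ω × ℝ)}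
    (hs : MeasurableSet[m.prod (borel ℝ)] s) :
    MeasurableSet[mΩ.prod Real.measurableSpace] s := by
  have hb : (borel ℝ) = (Real.measurableSpace) :=
    (BorelSpace.measurable_eq (α := ℝ)).symm
  have h2 : MeasurableSpace.comap (Prod.snd : Ω × ℝ → ℝ) (borel ℝ) ≤
      MeasurableSpace.comap (Prod.snd : Ω × ℝ → ℝ) Real.measurableSpace := by
    rw [hb]
  have h : m.prod (borel ℝ) ≤ mΩ.prod Real.measurableSpace :=
    sup_le_sup (MeasurableSpace.comap_mono hm) h2
  exact h s hs

def mixedDist (P : Measure Ω) (μ : Ω → ℝ → ℝ) : Measure (Ω × ℝ) :=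
  (P.prod lam).map (fun p => (p.1, μ p.1 p.2))

/-- The section measure `δ^t(A) := δ(A × [0,t])`. -/
def secMeas (δ : Measure (Ω × ℝ)) (t : ℝ) : Measure Ω :=
  (δ.restrict (univ ×ˢ Icc 0 t)).map Prod.fst

/-- A randomized stopping time: an adapted `[0,1]`-valued process with
nondecreasing right-continuous paths and `ρ_T ≡ 1`. -/
def IsRandomizedST (F : ℝ → MeasurableSpace Ω) (T : ℝ) (ρ : ℝ → Ω → ℝ) : Prop :=
  (∀ t ∈ Icc (0:ℝ) T, Measurable[F t] (ρ t)) ∧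
  (∀ t ∈ Icc (0:ℝ) T, ∀ ω, ρ t ω ∈ Icc (0:ℝ) 1) ∧
  (∀ ω, MonotoneOn (fun t => ρ t ω) (Icc 0 T)) ∧
  (∀ ω, ∀ t ∈ Ico (0:ℝ) T, ContinuousWithinAt (fun s => ρ s ω) (Icc t T) t) ∧
  (∀ ω, ρ T ω = 1)

/-- `δ` is the distribution stopping time `δ_ρ` induced by the randomized stopping
time `ρ`, i.e. `δ(A × [0,t]) = ∫_A ρ_t dP` for all `A ∈ F` and `t ∈ [0,T]`. -/
def IsRandDist (P : Measure Ω) (T : ℝ) (ρ : ℝ → Ω → ℝ) (δ : Measure (Ω × ℝ)) : Prop :=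
  ∀ A : Set Ω, MeasurableSet A → ∀ t ∈ Icc (0:ℝ) T,
    δ (A ×ˢ Icc 0 t) = ∫⁻ ω in A, ENNReal.ofReal (ρ t ω) ∂P

/-- A distribution stopping time: a probability measure on `Ω × [0,T]` whose
`Ω`-marginal is `P` and such that the Radon–Nikodym derivative of `δ^t` w.r.t. `P`
is `F_t`-measurable (has an `F_t`-measurable version) for every `t ∈ [0,T]`. -/
def IsDistST (P : Measure Ω) (F : ℝ → MeasurableSpace Ω) (T : ℝ)
    (δ : Measure (Ω × ℝ)) : Prop :=
  IsProbabilityMeasure δ ∧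
  δ.map Prod.fst = P ∧
  δ {p : Ω × ℝ | p.2 ∈ Icc 0 T}ᶜ = 0 ∧
  ∀ t ∈ Icc (0:ℝ) T, ∃ g : Ω → ENNReal,
    Measurable[F t] g ∧ g =ᵐ[P] (secMeas δ t).rnDeriv P

/-- The mixed stopping time `μ(ω,r) = min{t ∈ [0,T] : ρ_t(ω) ≥ r}` built from a
randomized stopping time `ρ`. -/
def candidateMixed (T : ℝ) (ρ : ℝ → Ω → ℝ) : Ω → ℝ → ℝ :=
  fun ω r => sInf {t | t ∈ Icc 0 T ∧ r ≤ ρ t ω}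

/-- The payoff of a stopping game at the pair of stopping times `(t,s)`:
`X_t` if Player 1 stops first, `Y_s` if Player 2 stops first, `Z_t` if they stop
simultaneously. -/
def gamePayoff (X Y Z : Ω × ℝ → ℝ) (ω : Ω) (t s : ℝ) : ℝ :=
  if t < s then X (ω, t) else if s < t then Y (ω, s) else Z (ω, t)

/-- The push-forward `δ_μ` of `P ⊗ λ` under `(ω,r) ↦ (ω,μ(ω,r))` is a
distribution stopping time. -/
theorem stmt3 (P : Measure Ω) [IsProbabilityMeasure P]
    (F : ℝ → MeasurableSpace Ω)
    (hle : ∀ t : ℝ, F t ≤ (inferInstance : MeasurableSpace Ω))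
    (T : ℝ) (hT : 0 ≤ T)
    (μ : Ω → ℝ → ℝ) (hμ : IsMixedST F T μ) :
    IsDistST P F T (mixedDist P μ) := by
  obtain ⟨hrange, hmeas⟩ := hμ
  -- measurability of the uncurried μ
  have hS : ∀ t ∈ Icc (0:ℝ) T,
      MeasurableSet {p : Ω × ℝ | μ p.1 p.2 ≤ t} := fun t ht =>
    prod_le_ambient (F t) (hle t) (hmeas t ht)
  have hμm : Measurable (fun p : Ω × ℝ => μ p.1 p.2) := by
    apply measurable_of_Iic
    intro t
    rcases lt_or_ge t 0 with h0 | h0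
    · have : (fun p : Ω × ℝ => μ p.1 p.2) ⁻¹' Iic t = ∅ := by
        ext p
        simp only [mem_preimage, mem_Iic, mem_empty_iff_false, iff_false, not_le]
        exact lt_of_lt_of_le h0 (hrange p.1 p.2).1
      rw [this]; exact MeasurableSet.empty
    rcases le_or_gt t T with hTt | hTt
    · exact hS t ⟨h0, hTt⟩
    · have : (fun p : Ω × ℝ => μ p.1 p.2) ⁻¹' Iic t = univ := by
        ext p
        simp only [mem_preimage, mem_Iic, mem_univ, iff_true]
        exact (hrange p.1 p.2).2.trans hTt.le
      rw [this]; exact MeasurableSet.univ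
  have hf : Measurable (fun p : Ω × ℝ => (p.1, μ p.1 p.2)) :=
    measurable_fst.prodMk hμm
  haveI : IsProbabilityMeasure (mixedDist P μ) :=
    Measure.isProbabilityMeasure_map hf.aemeasurable
  refine ⟨inferInstance, ?_, ?_, ?_⟩
  · -- Ω-marginal is P
    rw [mixedDist, Measure.map_map measurable_fst hf]
    have : (Prod.fst ∘ fun p : Ω × ℝ => (p.1, μ p.1 p.2)) = Prod.fst := rfl
    rw [this, Measure.map_fst_prod]
    simp
  · -- supported on [0,T] in time
    have hSm : MeasurableSet {p : Ω × ℝ | p.2 ∈ Icc 0 T}ᶜ :=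
      (measurable_snd measurableSet_Icc).compl
    rw [mixedDist, Measure.map_apply hf hSm]
    have : (fun p : Ω × ℝ => (p.1, μ p.1 p.2)) ⁻¹' {p : Ω × ℝ | p.2 ∈ Icc 0 T}ᶜ = ∅ := by
      ext p
      simp only [mem_preimage, mem_compl_iff, mem_setOf_eq, mem_empty_iff_false, iff_false,
        not_not]
      exact hrange p.1 p.2
    rw [this]
    simp
  · -- F_t-measurable density
    intro t ht
    set g : Ω → ENNReal := fun ω => lam {r | μ ω r ≤ t} with hg
    have hgF : Measurable[F t] g := by
      have := @measurable_measure_prodMk_left Ω ℝ (F t) (borel ℝ) lam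
        inferInstance {p : Ω × ℝ | μ p.1 p.2 ≤ t} (hmeas t ht)
      exact this
    have hgm : Measurable g := hgF.mono (hle t) le_rfl
    refine ⟨g, hgF, ?_⟩
    have hsec : secMeas (mixedDist P μ) t = P.withDensity g := by
      ext A hA
      rw [secMeas, Measure.map_apply measurable_fst hA, Measure.restrict_apply
        (measurable_fst hA), withDensity_apply g hA]
      have h1 : Prod.fst ⁻¹' A ∩ univ ×ˢ Icc 0 t = A ×ˢ Icc (0:ℝ) t := by
        ext p; simp [and_comm]
      rw [h1, mixedDist, Measure.map_apply hf (hA.prod measurableSet_Icc)]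
      have h2 : (fun p : Ω × ℝ => (p.1, μ p.1 p.2)) ⁻¹' (A ×ˢ Icc 0 t)
          = {p : Ω × ℝ | p.1 ∈ A ∧ μ p.1 p.2 ≤ t} := by
        ext p
        simp only [mem_preimage, mem_prod, mem_Icc, mem_setOf_eq]
        exact ⟨fun ⟨h, _, h2⟩ => ⟨h, h2⟩, fun ⟨h, h2⟩ => ⟨h, (hrange p.1 p.2).1, h2⟩⟩
      have h2m : MeasurableSet {p : Ω × ℝ | p.1 ∈ A ∧ μ p.1 p.2 ≤ t} := by
        have : {p : Ω × ℝ | p.1 ∈ A ∧ μ p.1 p.2 ≤ t}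
            = Prod.fst ⁻¹' A ∩ {p : Ω × ℝ | μ p.1 p.2 ≤ t} := by ext p; simp [mem_setOf_eq]
        rw [this]
        exact (measurable_fst hA).inter (hμm measurableSet_Iic)
      rw [h2, Measure.prod_apply h2m]
      have h3 : ∀ ω, lam (Prod.mk ω ⁻¹' {p : Ω × ℝ | p.1 ∈ A ∧ μ p.1 p.2 ≤ t})
          = A.indicator g ω := by
        intro ω
        by_cases hω : ω ∈ A
        · have : Prod.mk ω ⁻¹' {p : Ω × ℝ | p.1 ∈ A ∧ μ p.1 p.2 ≤ t}
              = {r | μ ω r ≤ t} := by ext r; simp [hω]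
          rw [this, indicator_of_mem hω]
        · have : Prod.mk ω ⁻¹' {p : Ω × ℝ | p.1 ∈ A ∧ μ p.1 p.2 ≤ t} = ∅ := by
            ext r; simp [hω]
          rw [this, indicator_of_notMem hω]
          simp
      rw [lintegral_congr h3, lintegral_indicator hA]
    rw [hsec]
    exact (Measure.rnDeriv_withDensity P hgm).symm

end StopEquiv
end
end

section
/- Let μ be a mixed stopping time and ρ a randomized stopping time on (Ω,F,P,(F_t)_{t∈[0,T]}). Then δ_μ = δ_ρ (the distribution stopping times they induce coincide) if and only if for every t ∈ [0,T], ρ_t(ω) = λ({r ∈ [0,1] : μ(ω,r) ≤ t}) for P-almost every ω. -/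
open MeasureTheory Set

noncomputable section

namespace StopEquiv

variable {Ω : Type*} [MeasurableSpace Ω]

instance : IsFiniteMeasure lam := by
  constructor
  simp [lam, Real.volume_Icc]

/-- The sublevel sets of a mixed stopping time are measurable. -/
lemma mixed_measurable {F : ℝ → MeasurableSpace Ω}
    (hle : ∀ t : ℝ, F t ≤ (inferInstance : MeasurableSpace Ω))
    {T : ℝ} {μ : Ω → ℝ → ℝ} (hμ : IsMixedST F T μ) :
    Measurable fun p : Ω × ℝ => μ p.1 p.2 := by
  apply measurable_of_Iic
  intro t
  rcases lt_or_ge t 0 with h | h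
  · have : (fun p : Ω × ℝ => μ p.1 p.2) ⁻¹' Iic t = ∅ := by
      ext p
      simp only [mem_preimage, mem_Iic, mem_empty_iff_false, iff_false, not_le]
      exact lt_of_lt_of_le h (hμ.1 p.1 p.2).1
    rw [this]; exact MeasurableSet.empty
  rcases le_or_gt t T with h2 | h2
  · have hps : (F t).prod (borel ℝ) ≤ (inferInstance : MeasurableSpace (Ω × ℝ)) := by
      refine sup_le_sup (MeasurableSpace.comap_mono (hle t)) (le_of_eq ?_)
      rw [← BorelSpace.measurable_eq (α := ℝ)]
    exact hps _ (hμ.2 t ⟨h, h2⟩)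
  · have : (fun p : Ω × ℝ => μ p.1 p.2) ⁻¹' Iic t = univ := by
      ext p
      simp only [mem_preimage, mem_Iic, mem_univ, iff_true]
      exact le_trans (hμ.1 p.1 p.2).2 h2.le
    rw [this]; exact MeasurableSet.univ

lemma mixedDist_apply (P : Measure Ω) [IsProbabilityMeasure P]
    {μ : Ω → ℝ → ℝ} (hm : Measurable fun p : Ω × ℝ => μ p.1 p.2)
    (hμ0 : ∀ ω r, 0 ≤ μ ω r)
    {A : Set Ω} (hA : MeasurableSet A) {t : ℝ} :
    mixedDist P μ (A ×ˢ Icc 0 t) = ∫⁻ ω in A, lam {r | μ ω r ≤ t} ∂P := by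
  rw [mixedDist, Measure.map_apply (measurable_fst.prodMk hm) (hA.prod measurableSet_Icc)]
  have hpre : (fun p : Ω × ℝ => (p.1, μ p.1 p.2)) ⁻¹' (A ×ˢ Icc 0 t)
      = Prod.fst ⁻¹' A ∩ {p : Ω × ℝ | μ p.1 p.2 ≤ t} := by
    ext p
    simp [mem_Icc, hμ0 p.1 p.2]
  have hS : MeasurableSet ((Prod.fst ⁻¹' A : Set (Ω × ℝ)) ∩ {p : Ω × ℝ | μ p.1 p.2 ≤ t}) :=
    (measurable_fst hA).inter (hm measurableSet_Iic)
  rw [hpre, Measure.prod_apply hS]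
  rw [← lintegral_indicator hA]
  congr 1
  ext ω
  by_cases hω : ω ∈ A
  · have : (Prod.mk ω ⁻¹' (Prod.fst ⁻¹' A ∩ {p : Ω × ℝ | μ p.1 p.2 ≤ t}))
        = {r | μ ω r ≤ t} := by
      ext r; simp [hω]
    rw [this, indicator_of_mem hω]
  · have : (Prod.mk ω ⁻¹' (Prod.fst ⁻¹' A ∩ {p : Ω × ℝ | μ p.1 p.2 ≤ t})) = ∅ := by
      ext r; simp [hω]
    rw [this, indicator_of_notMem hω]
    simp

/-- A mixed stopping time `μ` and a randomized stopping time `ρ` are equivalent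
(`δ_μ = δ_ρ`) if and only if `ρ_t(ω) = λ({r : μ(ω,r) ≤ t})` `P`-a.s., for every
`t ∈ [0,T]`. -/
theorem stmt5 (P : Measure Ω) [IsProbabilityMeasure P]
    (F : ℝ → MeasurableSpace Ω)
    (hle : ∀ t : ℝ, F t ≤ (inferInstance : MeasurableSpace Ω))
    (T : ℝ) (hT : 0 ≤ T)
    (μ : Ω → ℝ → ℝ) (hμ : IsMixedST F T μ)
    (ρ : ℝ → Ω → ℝ) (hρ : IsRandomizedST F T ρ) :
    IsRandDist P T ρ (mixedDist P μ) ↔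
      ∀ t ∈ Icc (0:ℝ) T,
        (fun ω => ENNReal.ofReal (ρ t ω)) =ᵐ[P] fun ω => lam {r | μ ω r ≤ t} := by
  have hm : Measurable fun p : Ω × ℝ => μ p.1 p.2 := mixed_measurable hle hμ
  have hμ0 : ∀ ω r, 0 ≤ μ ω r := fun ω r => (hμ.1 ω r).1
  have hsec : ∀ t : ℝ, Measurable fun ω => lam {r | μ ω r ≤ t} := by
    intro t
    have : ∀ ω, {r | μ ω r ≤ t} = Prod.mk ω ⁻¹' {p : Ω × ℝ | μ p.1 p.2 ≤ t} := by
      intro ω; ext r; simp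
    simp only [this]
    exact measurable_measure_prodMk_left (hm measurableSet_Iic)
  constructor
  · intro h t ht
    have hg : Measurable fun ω => ENNReal.ofReal (ρ t ω) :=
      ENNReal.measurable_ofReal.comp ((hρ.1 t ht).mono (hle t) le_rfl)
    refine ae_eq_of_forall_setLIntegral_eq_of_sigmaFinite hg (hsec t) fun A hA _ => ?_
    rw [← h A hA t ht, mixedDist_apply P hm hμ0 hA]
  · intro h A hA t ht
    rw [mixedDist_apply P hm hμ0 hA]
    exact (lintegral_congr_ae (ae_restrict_of_ae (h t ht))).symm
end StopEquiv
end
end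

section
/- Let δ be a distribution stopping time on Ω × [0,T]. Then there exists a randomized stopping time ρ with δ_ρ = δ. Explicitly, if ν : Ω → P([0,T]) is the disintegration of δ over its Ω-marginal P, then ρ_t(ω) := ν_ω([0,t]) defines an adapted, right-continuous, nondecreasing [0,1]-valued process with ρ_T = 1 and δ_ρ = δ. -/
open MeasureTheory Set
open scoped ProbabilityTheory

noncomputable section

namespace StopEquiv

variable {Ω : Type*} [MeasurableSpace Ω]

-- auxiliary lemmas

/-- infimum over rationals in `(t,s]` of `ν [0,q]` equals `ν [0,t]`. -/
lemma iInf_measure_Icc (ν : Measure ℝ) [IsFiniteMeasure ν] {t s : ℝ} (hts : t < s) :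
    ⨅ q : {q : ℚ // (q : ℝ) ∈ Ioc t s}, ν (Icc 0 (q : ℝ)) = ν (Icc 0 t) := by
  have hne : Nonempty {q : ℚ // (q : ℝ) ∈ Ioc t s} := by
    obtain ⟨q, hq1, hq2⟩ := exists_rat_btwn hts
    exact ⟨⟨q, hq1, hq2.le⟩⟩
  have hiI : ⋂ q : {q : ℚ // (q : ℝ) ∈ Ioc t s}, Icc (0:ℝ) (q:ℝ) = Icc 0 t := by
    apply Subset.antisymm
    · intro x hx
      simp only [mem_iInter, mem_Icc] at hx
      obtain ⟨q0⟩ := hne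
      refine mem_Icc.mpr ⟨(hx q0).1, ?_⟩
      by_contra hxt
      push_neg at hxt
      obtain ⟨q, hq1, hq2⟩ := exists_rat_btwn (lt_min hxt hts)
      have hqle := (hx ⟨q, hq1, (hq2.trans_le (min_le_right _ _)).le⟩).2
      exact absurd hqle (not_le.mpr (hq2.trans_le (min_le_left _ _)))
    · intro x hx
      simp only [mem_iInter, mem_Icc]
      intro q
      exact ⟨hx.1, hx.2.trans (le_of_lt q.2.1)⟩
  rw [← hiI]
  refine (Directed.measure_iInter (μ := ν)
    (s := fun q : {q : ℚ // (q : ℝ) ∈ Ioc t s} => Icc (0:ℝ) (q:ℝ))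
    (fun q => measurableSet_Icc.nullMeasurableSet) ?_
    ⟨hne.some, measure_ne_top _ _⟩).symm
  intro q1 q2
  refine ⟨⟨min q1.1 q2.1, ?_, ?_⟩, ?_, ?_⟩
  · push_cast; exact lt_min q1.2.1 q2.2.1
  · push_cast; exact le_trans (min_le_left _ _) q1.2.2
  · refine Icc_subset_Icc_right ?_; push_cast; exact min_le_left _ _
  · refine Icc_subset_Icc_right ?_; push_cast; exact min_le_right _ _

/-- right continuity of `s ↦ ν [0,s]` on `[t, T']`. -/
lemma rc_aux (ν : Measure ℝ) [IsFiniteMeasure ν] {t T' : ℝ} (ht : t < T') :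
    ContinuousWithinAt (fun s => (ν (Icc 0 s)).toReal) (Icc t T') t := by
  rw [Metric.continuousWithinAt_iff]
  intro ε hε
  have hi := iInf_measure_Icc ν ht
  have hlt : ⨅ q : {q : ℚ // (q : ℝ) ∈ Ioc t T'}, ν (Icc 0 (q : ℝ))
      < ν (Icc 0 t) + ENNReal.ofReal ε := by
    rw [hi]
    exact ENNReal.lt_add_right (measure_ne_top _ _) (ENNReal.ofReal_pos.mpr hε).ne'
  obtain ⟨q, hq⟩ := iInf_lt_iff.mp hlt
  refine ⟨(q : ℝ) - t, by linarith [q.2.1], ?_⟩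
  intro y hy hdist
  have hyq : y < (q : ℝ) := by
    rw [Real.dist_eq, abs_of_nonneg (by linarith [hy.1])] at hdist
    linarith
  have h1 : ν (Icc 0 t) ≤ ν (Icc 0 y) := measure_mono (Icc_subset_Icc_right hy.1)
  have h3 : ν (Icc 0 y) < ν (Icc 0 t) + ENNReal.ofReal ε :=
    lt_of_le_of_lt (measure_mono (Icc_subset_Icc_right hyq.le)) hq
  have h1' : (ν (Icc 0 t)).toReal ≤ (ν (Icc 0 y)).toReal :=
    ENNReal.toReal_mono (measure_ne_top _ _) h1
  have h3' : (ν (Icc 0 y)).toReal < (ν (Icc 0 t)).toReal + ε := by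
    have hne : ν (Icc 0 t) + ENNReal.ofReal ε ≠ ⊤ :=
      ENNReal.add_ne_top.mpr ⟨measure_ne_top _ _, ENNReal.ofReal_ne_top⟩
    have := (ENNReal.toReal_lt_toReal (measure_ne_top _ _) hne).mpr h3
    rwa [ENNReal.toReal_add (measure_ne_top _ _) ENNReal.ofReal_ne_top,
      ENNReal.toReal_ofReal hε.le] at this
  rw [Real.dist_eq, abs_of_nonneg (sub_nonneg.mpr h1')]
  linarith


/-- Every distribution stopping time is equivalent to some randomized stopping
time: there is a randomized stopping time `ρ` with `δ_ρ = δ`. -/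
theorem stmt8 (P : Measure Ω) [IsProbabilityMeasure P]
    (F : ℝ → MeasurableSpace Ω) (T : ℝ) (hT : 0 ≤ T)
    (hUC : UsualConditions P F T)
    (δ : Measure (Ω × ℝ)) (hδ : IsDistST P F T δ) :
    ∃ ρ : ℝ → Ω → ℝ, IsRandomizedST F T ρ ∧ IsRandDist P T ρ δ := by
  classical
  obtain ⟨hprob, hfst, hconc, hgex⟩ := hδ
  haveI := hprob
  have hfst' : δ.fst = P := by rw [Measure.fst, hfst]
  set κ := δ.condKernel with hκdef
  have hdis : P ⊗ₘ κ = δ := by rw [← hfst']; exact δ.disintegrate κ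
  haveI : ProbabilityTheory.IsMarkovKernel κ := by rw [hκdef]; infer_instance
  -- basic formula
  have hδAB : ∀ (A : Set Ω), MeasurableSet A → ∀ t : ℝ,
      δ (A ×ˢ Icc 0 t) = ∫⁻ ω in A, κ ω (Icc 0 t) ∂P := by
    intro A hA t
    rw [← hdis, Measure.compProd_apply_prod hA measurableSet_Icc]
  have hκmeas : ∀ t : ℝ, Measurable fun ω => κ ω (Icc 0 t) :=
    fun t => ProbabilityTheory.Kernel.measurable_coe κ measurableSet_Icc
  -- section measures are densities
  have hsec : ∀ t : ℝ, secMeas δ t = P.withDensity (fun ω => κ ω (Icc 0 t)) := by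
    intro t
    ext A hA
    rw [secMeas, Measure.map_apply measurable_fst hA,
      Measure.restrict_apply (measurable_fst hA), withDensity_apply _ hA]
    have hAe : Prod.fst ⁻¹' A ∩ univ ×ˢ Icc 0 t = A ×ˢ Icc (0:ℝ) t := by
      ext p; simp [mem_prod, and_comm]
    rw [hAe, hδAB A hA t]
  choose g hgmeas hgae using hgex
  have hfg : ∀ t (ht : t ∈ Icc 0 T), (fun ω => κ ω (Icc 0 t)) =ᵐ[P] g t ht := by
    intro t ht
    have h1 : (secMeas δ t).rnDeriv P =ᵐ[P] fun ω => κ ω (Icc 0 t) := by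
      rw [hsec t]; exact Measure.rnDeriv_withDensity P (hκmeas t)
    exact h1.symm.trans (hgae t ht).symm
  -- the kernel gives full mass to [0,T] a.e.
  have hT1 : ∀ᵐ ω ∂P, κ ω (Icc 0 T) = 1 := by
    have hcompl : δ (univ ×ˢ (Icc (0:ℝ) T)ᶜ) = 0 := by
      have : {p : Ω × ℝ | p.2 ∈ Icc 0 T}ᶜ = univ ×ˢ (Icc (0:ℝ) T)ᶜ := by
        ext ⟨a, b⟩; simp
      rw [← this]; exact hconc
    have h1 : ∫⁻ ω, κ ω ((Icc (0:ℝ) T)ᶜ) ∂P = 0 := by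
      rw [← setLIntegral_univ, ← Measure.compProd_apply_prod MeasurableSet.univ
        measurableSet_Icc.compl, hdis, hcompl]
    have h2 := (lintegral_eq_zero_iff (ProbabilityTheory.Kernel.measurable_coe κ measurableSet_Icc.compl)).mp h1
    filter_upwards [h2] with ω hω
    exact (prob_compl_eq_zero_iff measurableSet_Icc).mp hω
  -- the exceptional null set
  set Nset : Set Ω := {ω | κ ω (Icc 0 T) ≠ 1} ∪
      ⋃ (q : ℚ) (hq : (q:ℝ) ∈ Icc 0 T), {ω | κ ω (Icc 0 (q:ℝ)) ≠ g (q:ℝ) hq ω} with hNdef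
  have heqset : ∀ (a b : Ω → ENNReal), Measurable a → Measurable b →
      MeasurableSet {ω | a ω ≠ b ω} := by
    intro a b ha hb
    have h1 : {ω | a ω = b ω} = {ω | a ω ≤ b ω} ∩ {ω | b ω ≤ a ω} := by
      ext ω; simp [le_antisymm_iff]
    have h2 : MeasurableSet {ω | a ω = b ω} := by
      rw [h1]; exact (measurableSet_le ha hb).inter (measurableSet_le hb ha)
    exact h2.compl
  have hNmeas : MeasurableSet Nset := by
    refine MeasurableSet.union ?_ (MeasurableSet.iUnion fun q => MeasurableSet.iUnion fun hq => ?_)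
    · exact heqset _ _ (hκmeas T) measurable_const
    · exact heqset _ _ (hκmeas (q:ℝ)) ((hgmeas (q:ℝ) hq).mono (hUC.2.1 (q:ℝ)) le_rfl)
  have hNnull : P Nset = 0 := by
    refine measure_union_null ?_ (measure_iUnion_null fun q => measure_iUnion_null fun hq => ?_)
    · rw [← compl_setOf]
      simpa [ae_iff, compl_setOf] using hT1
    · have := hfg (q:ℝ) hq
      exact ae_iff.mp this
  have hNF : ∀ s : ℝ, 0 ≤ s → MeasurableSet[F s] Nset := by
    intro s hs
    exact (hUC.1 0 s hs) _ (hUC.2.2.2 Nset ⟨Nset, hNmeas, subset_rfl, hNnull⟩)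
  have hωN : ∀ ω, ω ∉ Nset → (κ ω (Icc 0 T) = 1 ∧
      ∀ (q : ℚ) (hq : (q:ℝ) ∈ Icc 0 T), κ ω (Icc 0 (q:ℝ)) = g (q:ℝ) hq ω) := by
    intro ω hω
    rw [hNdef] at hω
    simp only [mem_union, mem_iUnion, mem_setOf_eq, not_or, not_exists, ne_eq, not_not] at hω
    exact hω
  -- the randomized stopping time
  refine ⟨fun t ω => if ω ∈ Nset then (if T ≤ t then 1 else 0) else (κ ω (Icc 0 t)).toReal,
    ⟨?_, ?_, ?_, ?_, ?_⟩, ?_⟩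
  · -- adapted
    intro t ht
    rcases eq_or_lt_of_le ht.2 with rfl | htlt
    · have : (fun ω => if ω ∈ Nset then (if t ≤ t then (1:ℝ) else 0)
          else (κ ω (Icc 0 t)).toReal) = fun _ => (1:ℝ) := by
        funext ω
        by_cases hω : ω ∈ Nset
        · simp [hω]
        · simp [hω, (hωN ω hω).1]
      show Measurable[F t] fun ω => if ω ∈ Nset then (if t ≤ t then (1:ℝ) else 0)
        else (κ ω (Icc 0 t)).toReal
      rw [this]; exact measurable_const
    · -- use right continuity of the filtration
      have hFeq := hUC.2.2.1 t ⟨ht.1, htlt⟩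
      have hkey : ∀ s ∈ Ioc t T, Measurable[F s] fun ω =>
          if ω ∈ Nset then (if T ≤ t then (1:ℝ) else 0) else (κ ω (Icc 0 t)).toReal := by
        intro s hs
        have hmem : ∀ q : {q : ℚ // (q:ℝ) ∈ Ioc t s}, (q:ℝ) ∈ Icc 0 T :=
          fun q => ⟨le_of_lt (lt_of_le_of_lt ht.1 q.2.1), le_trans q.2.2 hs.2⟩
        have hfun : (fun ω => if ω ∈ Nset then (if T ≤ t then (1:ℝ) else 0)
            else (κ ω (Icc 0 t)).toReal) = fun ω => if ω ∈ Nset then 0 else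
            (⨅ q : {q : ℚ // (q:ℝ) ∈ Ioc t s}, g (q:ℝ) (hmem q) ω).toReal := by
          funext ω
          by_cases hω : ω ∈ Nset
          · simp [hω, not_le.mpr htlt]
          · simp only [if_neg hω]
            congr 1
            have : ∀ q : {q : ℚ // (q:ℝ) ∈ Ioc t s}, g (q:ℝ) (hmem q) ω = κ ω (Icc 0 (q:ℝ)) :=
              fun q => ((hωN ω hω).2 q (hmem q)).symm
            rw [iInf_congr this, iInf_measure_Icc (κ ω) hs.1]
        rw [hfun]
        refine Measurable.ite (hNF s (le_trans ht.1 hs.1.le)) measurable_const ?_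
        refine ENNReal.measurable_toReal.comp (Measurable.iInf fun q => ?_)
        exact (hgmeas (q:ℝ) (hmem q)).mono (hUC.1 (q:ℝ) s q.2.2) le_rfl
      rw [hFeq]
      intro B hB
      simp only [MeasurableSpace.measurableSet_iInf]
      intro s hs
      exact hkey s hs hB
  · -- values in [0,1]
    intro t ht ω
    by_cases hω : ω ∈ Nset
    · simp only [if_pos hω]
      split <;> norm_num
    · simp only [if_neg hω]
      constructor
      · exact ENNReal.toReal_nonneg
      · exact le_trans (ENNReal.toReal_mono ENNReal.one_ne_top prob_le_one) (by norm_num)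
  · -- monotone
    intro ω
    have : Monotone fun t => if ω ∈ Nset then (if T ≤ t then (1:ℝ) else 0)
        else (κ ω (Icc 0 t)).toReal := by
      intro t1 t2 h12
      by_cases hω : ω ∈ Nset
      · simp only [if_pos hω]
        by_cases h1 : T ≤ t1
        · rw [if_pos h1, if_pos (h1.trans h12)]
        · rw [if_neg h1]; split <;> norm_num
      · simp only [if_neg hω]
        exact ENNReal.toReal_mono (measure_ne_top _ _)
          (measure_mono (Icc_subset_Icc_right h12))
    exact this.monotoneOn _
  · -- right continuity
    intro ω t ht
    by_cases hω : ω ∈ Nset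
    · simp only [if_pos hω]
      have hev : ∀ᶠ s in nhdsWithin t (Icc t T), (if T ≤ s then (1:ℝ) else 0) = 0 := by
        refine eventually_nhdsWithin_of_eventually_nhds ?_
        filter_upwards [Iio_mem_nhds ht.2] with s hs
        rw [if_neg (not_le.mpr hs)]
      have h0 : (if T ≤ t then (1:ℝ) else 0) = 0 := if_neg (not_le.mpr ht.2)
      exact continuousWithinAt_const.congr_of_eventuallyEq hev h0
    · simp only [if_neg hω]
      exact rc_aux (κ ω) ht.2
  · -- value 1 at T
    intro ω
    by_cases hω : ω ∈ Nset
    · simp [hω]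
    · simp [hω, (hωN ω hω).1]
  · -- the distribution condition
    intro A hA t ht
    rw [hδAB A hA t]
    refine lintegral_congr_ae (ae_restrict_of_ae ?_)
    have hNae : ∀ᵐ ω ∂P, ω ∉ Nset := by
      rw [ae_iff]
      simpa using hNnull
    filter_upwards [hNae] with ω hω
    rw [if_neg hω, ENNReal.ofReal_toReal (measure_ne_top _ _)]

end StopEquiv
end
end

section
/- Suppose the filtration satisfies the usual conditions. Then every distribution stopping time δ is equivalent to a unique (up to indistinguishability) randomized stopping time and to at least one mixed stopping time; i.e., there exist a randomized stopping time ρ and a mixed stopping time μ with δ_ρ = δ_μ = δ, and ρ is unique up to indistinguishability. -/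
open MeasureTheory Set

noncomputable section

namespace StopEquiv

variable {Ω : Type*} [MeasurableSpace Ω]

/-! ### Auxiliary constructions -/

open scoped ENNReal Classical

section Aux

variable (P : Measure Ω) (F : ℝ → MeasurableSpace Ω) (T : ℝ) (δ : Measure (Ω × ℝ))

/-- A selected `F_q`-measurable version of the Radon–Nikodym derivative, clamped to `≤ 1`. -/
noncomputable def gsel (q : ℝ) : Ω → ℝ≥0∞ :=
  if h : ∃ g : Ω → ℝ≥0∞, Measurable[F q] g ∧ g =ᵐ[P] (secMeas δ q).rnDeriv P
  then fun ω => min (h.choose ω) 1 else fun _ => 1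

/-- The exceptional null set where the selected densities fail to be monotone. -/
def badN : Set Ω :=
  ⋃ (q : ℚ) (q' : ℚ),
    {ω | 0 ≤ (q : ℝ) ∧ (q : ℝ) ≤ (q' : ℝ) ∧ (q' : ℝ) ≤ T ∧
      gsel P F δ q' ω < gsel P F δ q ω}

/-- The right-continuous regularized density process, `ℝ≥0∞`-valued. -/
noncomputable def rhoE : ℝ → Ω → ℝ≥0∞ := fun t ω =>
  if ω ∈ badN P F T δ then 1
  else min 1 (⨅ q : {q : ℚ // t < (q : ℝ) ∧ (q : ℝ) ≤ T}, gsel P F δ (q : ℝ) ω)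

/-- The candidate randomized stopping time. -/
noncomputable def rho : ℝ → Ω → ℝ := fun t ω => (rhoE P F T δ t ω).toReal

end Aux

section AuxLemmas

variable {P : Measure Ω} {F : ℝ → MeasurableSpace Ω} {T : ℝ} {δ : Measure (Ω × ℝ)}

lemma secMeas_apply (t : ℝ) {A : Set Ω} (hA : MeasurableSet A) :
    secMeas δ t A = δ (A ×ˢ Icc 0 t) := by
  rw [secMeas, Measure.map_apply measurable_fst hA,
    Measure.restrict_apply (hA.preimage measurable_fst)]
  congr 1
  ext p
  simp [Set.mem_prod, and_comm]

lemma gsel_meas (q : ℝ) : Measurable[F q] (gsel P F δ q) := by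
  rw [gsel]
  split_ifs with h
  · exact h.choose_spec.1.min measurable_const
  · exact measurable_const

lemma gsel_le_one (q : ℝ) (ω : Ω) : gsel P F δ q ω ≤ 1 := by
  rw [gsel]
  split_ifs with h
  · exact min_le_right _ _
  · exact le_rfl

lemma gsel_ne_top (q : ℝ) (ω : Ω) : gsel P F δ q ω ≠ ⊤ :=
  ne_top_of_le_ne_top ENNReal.one_ne_top (gsel_le_one q ω)

lemma prod_univ_apply (hδ : IsDistST P F T δ) {A : Set Ω} (hA : MeasurableSet A) :
    δ (A ×ˢ (univ : Set ℝ)) = P A := by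
  rw [← hδ.2.1, Measure.map_apply measurable_fst hA]
  congr 1
  ext p
  simp

lemma secMeas_le (hδ : IsDistST P F T δ) (t : ℝ) : secMeas δ t ≤ P := by
  rw [Measure.le_iff]
  intro A hA
  rw [secMeas_apply t hA, ← prod_univ_apply hδ hA]
  exact measure_mono (prod_mono_right (subset_univ _))

lemma secMeas_fin (hδ : IsDistST P F T δ) [IsProbabilityMeasure P] (t : ℝ) :
    IsFiniteMeasure (secMeas δ t) :=
  ⟨lt_of_le_of_lt (Measure.le_iff'.1 (secMeas_le hδ t) univ) (measure_lt_top P univ)⟩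

lemma rn_le_one (hδ : IsDistST P F T δ) [IsProbabilityMeasure P] (t : ℝ) :
    (secMeas δ t).rnDeriv P ≤ᵐ[P] 1 :=
  Measure.rnDeriv_le_one_of_le (secMeas_le hδ t)

lemma setl_rn (hδ : IsDistST P F T δ) [IsProbabilityMeasure P] (t : ℝ) {A : Set Ω}
    (hA : MeasurableSet A) :
    ∫⁻ ω in A, (secMeas δ t).rnDeriv P ω ∂P = δ (A ×ˢ Icc 0 t) := by
  haveI := secMeas_fin hδ t
  rw [Measure.setLIntegral_rnDeriv'
    (Measure.absolutelyContinuous_of_le (secMeas_le hδ t)) hA, secMeas_apply t hA]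

lemma rn_mono (hδ : IsDistST P F T δ) [IsProbabilityMeasure P] {s t : ℝ} (hst : s ≤ t) :
    (secMeas δ s).rnDeriv P ≤ᵐ[P] (secMeas δ t).rnDeriv P := by
  refine ae_le_of_forall_setLIntegral_le_of_sigmaFinite
    (Measure.measurable_rnDeriv _ _) fun A hA _ => ?_
  rw [setl_rn hδ s hA, setl_rn hδ t hA]
  exact measure_mono (prod_mono_right (Icc_subset_Icc le_rfl hst))

lemma gsel_ae (hδ : IsDistST P F T δ) [IsProbabilityMeasure P] {q : ℝ} (hq : q ∈ Icc 0 T) :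
    gsel P F δ q =ᵐ[P] (secMeas δ q).rnDeriv P := by
  rw [gsel, dif_pos (hδ.2.2.2 q hq)]
  filter_upwards [(hδ.2.2.2 q hq).choose_spec.2, rn_le_one hδ q] with ω h1 h2
  rw [h1]
  exact min_eq_left h2

lemma badN_meas (hUC : UsualConditions P F T) : MeasurableSet (badN P F T δ) := by
  refine MeasurableSet.iUnion fun q => MeasurableSet.iUnion fun q' => ?_
  rcases Classical.em (0 ≤ (q:ℝ) ∧ (q:ℝ) ≤ (q':ℝ) ∧ (q':ℝ) ≤ T) with h | h
  · have heq : {ω | 0 ≤ (q:ℝ) ∧ (q:ℝ) ≤ (q':ℝ) ∧ (q':ℝ) ≤ T ∧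
        gsel P F δ (q':ℝ) ω < gsel P F δ (q:ℝ) ω}
        = {ω | gsel P F δ (q':ℝ) ω < gsel P F δ (q:ℝ) ω} := by
      ext ω
      simp only [mem_setOf_eq, h.1, h.2.1, h.2.2, true_and]
    rw [heq]
    exact measurableSet_lt ((gsel_meas _).mono (hUC.2.1 _) le_rfl)
      ((gsel_meas _).mono (hUC.2.1 _) le_rfl)
  · have heq : {ω | 0 ≤ (q:ℝ) ∧ (q:ℝ) ≤ (q':ℝ) ∧ (q':ℝ) ≤ T ∧
        gsel P F δ (q':ℝ) ω < gsel P F δ (q:ℝ) ω} = (∅ : Set Ω) := by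
      ext ω
      simp only [mem_setOf_eq, mem_empty_iff_false, iff_false]
      intro hω
      exact h ⟨hω.1, hω.2.1, hω.2.2.1⟩
    rw [heq]
    exact MeasurableSet.empty

lemma badN_null (hδ : IsDistST P F T δ) [IsProbabilityMeasure P] :
    P (badN P F T δ) = 0 := by
  rw [badN]
  refine measure_iUnion_null fun q => measure_iUnion_null fun q' => ?_
  rcases Classical.em (0 ≤ (q:ℝ) ∧ (q:ℝ) ≤ (q':ℝ) ∧ (q':ℝ) ≤ T) with h | h
  · have hq : (q:ℝ) ∈ Icc 0 T := ⟨h.1, h.2.1.trans h.2.2⟩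
    have hq' : (q':ℝ) ∈ Icc 0 T := ⟨h.1.trans h.2.1, h.2.2⟩
    have hle : ∀ᵐ ω ∂P, gsel P F δ (q:ℝ) ω ≤ gsel P F δ (q':ℝ) ω := by
      filter_upwards [gsel_ae hδ hq, gsel_ae hδ hq', rn_mono hδ h.2.1] with ω e1 e2 e3
      rw [e1, e2]; exact e3
    rw [ae_iff] at hle
    refine measure_mono_null (fun ω hω => ?_) hle
    simp only [mem_setOf_eq] at hω ⊢
    exact not_le.2 hω.2.2.2
  · have heq : {ω | 0 ≤ (q:ℝ) ∧ (q:ℝ) ≤ (q':ℝ) ∧ (q':ℝ) ≤ T ∧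
        gsel P F δ (q':ℝ) ω < gsel P F δ (q:ℝ) ω} = (∅ : Set Ω) := by
      ext ω
      simp only [mem_setOf_eq, mem_empty_iff_false, iff_false]
      intro hω
      exact h ⟨hω.1, hω.2.1, hω.2.2.1⟩
    rw [heq]
    exact measure_empty

lemma badN_F0 (hδ : IsDistST P F T δ) (hUC : UsualConditions P F T)
    [IsProbabilityMeasure P] : MeasurableSet[F 0] (badN P F T δ) :=
  hUC.2.2.2 _ ⟨badN P F T δ, badN_meas hUC, subset_rfl, badN_null hδ⟩

lemma gsel_mono_of_notbad {ω : Ω} (hω : ω ∉ badN P F T δ) {q q' : ℚ} (h0 : 0 ≤ (q:ℝ))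
    (hqq : (q:ℝ) ≤ (q':ℝ)) (hq'T : (q':ℝ) ≤ T) :
    gsel P F δ (q:ℝ) ω ≤ gsel P F δ (q':ℝ) ω := by
  by_contra hlt
  exact hω (mem_iUnion.2 ⟨q, mem_iUnion.2 ⟨q', ⟨h0, hqq, hq'T, not_le.1 hlt⟩⟩⟩)


lemma rhoE_le_one (t : ℝ) (ω : Ω) : rhoE P F T δ t ω ≤ 1 := by
  rw [rhoE]
  split_ifs with h
  · exact le_rfl
  · exact min_le_left _ _

lemma rhoE_ne_top (t : ℝ) (ω : Ω) : rhoE P F T δ t ω ≠ ⊤ :=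
  ne_top_of_le_ne_top ENNReal.one_ne_top (rhoE_le_one t ω)

lemma rhoE_mono (ω : Ω) : Monotone fun t => rhoE P F T δ t ω := by
  intro s t hst
  simp only [rhoE]
  split_ifs with h
  · exact le_rfl
  · exact min_le_min le_rfl
      (le_iInf fun q => iInf_le_of_le ⟨q.1, lt_of_le_of_lt hst q.2.1, q.2.2⟩ le_rfl)

lemma rhoE_of_ge {t : ℝ} (ht : T ≤ t) (ω : Ω) : rhoE P F T δ t ω = 1 := by
  rw [rhoE]
  split_ifs with h
  · rfl
  · haveI : IsEmpty {q : ℚ // t < (q:ℝ) ∧ (q:ℝ) ≤ T} :=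
      ⟨fun q => absurd (lt_of_lt_of_le q.2.1 q.2.2) (not_lt.2 ht)⟩
    rw [iInf_of_empty]
    simp

lemma rho_nonneg (t : ℝ) (ω : Ω) : 0 ≤ rho P F T δ t ω := ENNReal.toReal_nonneg

lemma rho_le_one (t : ℝ) (ω : Ω) : rho P F T δ t ω ≤ 1 := by
  have := ENNReal.toReal_mono ENNReal.one_ne_top (rhoE_le_one (P := P) (F := F) (T := T) (δ := δ) t ω)
  simpa [rho] using this

lemma rho_mono (ω : Ω) : Monotone fun t => rho P F T δ t ω := fun s t hst =>
  ENNReal.toReal_mono (rhoE_ne_top t ω) (rhoE_mono ω hst)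

lemma rho_of_ge {t : ℝ} (ht : T ≤ t) (ω : Ω) : rho P F T δ t ω = 1 := by
  rw [rho, rhoE_of_ge ht]
  simp

lemma rho_eps {t : ℝ} (ht0 : 0 ≤ t) (htT : t < T) (ω : Ω) {ε : ℝ} (hε : 0 < ε) :
    ∃ u, t < u ∧ u ≤ T ∧ rho P F T δ u ω < rho P F T δ t ω + ε := by
  by_cases hb : ω ∈ badN P F T δ
  · refine ⟨T, htT, le_rfl, ?_⟩
    have h1 : rho P F T δ T ω = 1 := rho_of_ge le_rfl ω
    have h2 : rho P F T δ t ω = 1 := by rw [rho, rhoE, if_pos hb]; simp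
    rw [h1, h2]; linarith
  · set b := ⨅ q : {q : ℚ // t < (q:ℝ) ∧ (q:ℝ) ≤ T}, gsel P F δ (q:ℝ) ω with hbdef
    have hrt : rhoE P F T δ t ω = min 1 b := by rw [rhoE, if_neg hb]
    by_cases h1b : 1 ≤ b
    · refine ⟨T, htT, le_rfl, ?_⟩
      have h1 : rho P F T δ T ω = 1 := rho_of_ge le_rfl ω
      have h2 : rho P F T δ t ω = 1 := by rw [rho, hrt, min_eq_left h1b]; simp
      rw [h1, h2]; linarith
    · push_neg at h1b
      have hbne : b ≠ ⊤ := (h1b.trans_le le_top).ne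
      have hlt : b < b + ENNReal.ofReal ε :=
        ENNReal.lt_add_right hbne (by simp [hε])
      obtain ⟨q, hq⟩ : ∃ q : {q : ℚ // t < (q:ℝ) ∧ (q:ℝ) ≤ T},
          gsel P F δ (q:ℝ) ω < b + ENNReal.ofReal ε := iInf_lt_iff.1 (hbdef ▸ hlt)
      have hq1 : t < (q:ℝ) := q.2.1
      have hq2 : (q:ℝ) ≤ T := q.2.2
      refine ⟨(t + q) / 2, by linarith, by linarith, ?_⟩
      have hu : rhoE P F T δ ((t + q) / 2) ω ≤ gsel P F δ (q:ℝ) ω := by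
        rw [rhoE, if_neg hb]
        exact le_trans (min_le_right _ _)
          (iInf_le_of_le ⟨q.1, by constructor <;> [linarith; exact hq2]⟩ le_rfl)
      have hlt2 : rhoE P F T δ ((t + q) / 2) ω < b + ENNReal.ofReal ε := lt_of_le_of_lt hu hq
      have hrteq : rhoE P F T δ t ω = b := by rw [hrt, min_eq_right h1b.le]
      rw [rho, rho, hrteq]
      have := (ENNReal.toReal_lt_toReal (rhoE_ne_top _ ω)
        (by simp [hbne, ENNReal.add_ne_top] : b + ENNReal.ofReal ε ≠ ⊤)).2 hlt2
      rwa [ENNReal.toReal_add hbne ENNReal.ofReal_ne_top, ENNReal.toReal_ofReal hε.le] at this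

lemma rho_cwa (ω : Ω) {t : ℝ} (ht : t ∈ Ico 0 T) :
    ContinuousWithinAt (fun s => rho P F T δ s ω) (Icc t T) t := by
  rw [Metric.continuousWithinAt_iff]
  intro ε hε
  obtain ⟨u, hu1, hu2, hu3⟩ := rho_eps (P := P) (F := F) (δ := δ) ht.1 ht.2 ω hε
  refine ⟨u - t, by linarith, fun {y} hy hdist => ?_⟩
  have hy1 : t ≤ y := hy.1
  have hy2 : y < u := by
    rw [Real.dist_eq, abs_lt] at hdist
    linarith [hdist.2]
  have m1 : rho P F T δ t ω ≤ rho P F T δ y ω := rho_mono ω hy1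
  have m2 : rho P F T δ y ω ≤ rho P F T δ u ω := rho_mono ω hy2.le
  rw [Real.dist_eq, abs_of_nonneg (by linarith)]
  linarith

lemma rhoE_meas (hδ : IsDistST P F T δ) (hUC : UsualConditions P F T)
    [IsProbabilityMeasure P] {t : ℝ} (ht : t ∈ Icc 0 T) :
    Measurable[F t] (rhoE P F T δ t) := by
  rcases eq_or_lt_of_le ht.2 with hEq | hlt
  · have : rhoE P F T δ t = fun _ => 1 := funext fun ω => rhoE_of_ge hEq.ge ω
    rw [this]
    exact measurable_const
  · have hFt : F t = ⨅ s ∈ Ioc t T, F s := hUC.2.2.1 t ⟨ht.1, hlt⟩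
    rw [measurable_iff_comap_le, hFt]
    refine le_iInf fun s => le_iInf fun hs => ?_
    rw [← measurable_iff_comap_le]
    have key : rhoE P F T δ t = fun ω =>
        if ω ∈ badN P F T δ then 1
        else min 1 (⨅ q : {q : ℚ // t < (q:ℝ) ∧ (q:ℝ) ≤ s}, gsel P F δ (q:ℝ) ω) := by
      funext ω
      rw [rhoE]
      split_ifs with h
      · rfl
      · congr 1
        refine le_antisymm (le_iInf fun q => ?_) (le_iInf fun q => ?_)
        · exact iInf_le_of_le ⟨q.1, q.2.1, le_trans q.2.2 hs.2⟩ le_rfl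
        · obtain ⟨q2, hq21, hq22⟩ := exists_rat_btwn (lt_min q.2.1 hs.1)
          have h2s : (q2:ℝ) < s := lt_of_lt_of_le hq22 (min_le_right _ _)
          have h2q : (q2:ℝ) ≤ (q:ℝ) := (lt_of_lt_of_le hq22 (min_le_left _ _)).le
          refine iInf_le_of_le ⟨q2, hq21, h2s.le⟩ ?_
          exact gsel_mono_of_notbad h (le_of_lt (lt_of_le_of_lt ht.1 hq21)) h2q q.2.2
    rw [key]
    have hbad : MeasurableSet[F s] (badN P F T δ) :=
      hUC.1 0 s (le_trans ht.1 hs.1.le) _ (badN_F0 hδ hUC)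
    refine Measurable.ite hbad measurable_const ?_
    refine Measurable.min measurable_const (Measurable.iInf fun q => ?_)
    exact (gsel_meas _).mono (hUC.1 _ s q.2.2) le_rfl

lemma rho_meas (hδ : IsDistST P F T δ) (hUC : UsualConditions P F T)
    [IsProbabilityMeasure P] {t : ℝ} (ht : t ∈ Icc 0 T) :
    Measurable[F t] (rho P F T δ t) :=
  ENNReal.measurable_toReal.comp (rhoE_meas hδ hUC ht)


lemma prod_IccT_apply (hδ : IsDistST P F T δ) {A : Set Ω} (hA : MeasurableSet A) :
    δ (A ×ˢ Icc 0 T) = P A := by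
  rw [← prod_univ_apply hδ hA]
  refine le_antisymm (measure_mono (prod_mono_right (subset_univ _))) ?_
  have hsub : A ×ˢ (univ : Set ℝ) ⊆ A ×ˢ Icc 0 T ∪ {p : Ω × ℝ | p.2 ∈ Icc 0 T}ᶜ := by
    intro p hp
    by_cases h2 : p.2 ∈ Icc 0 T
    · exact Or.inl ⟨hp.1, h2⟩
    · exact Or.inr h2
  calc δ (A ×ˢ (univ : Set ℝ)) ≤ δ (A ×ˢ Icc 0 T ∪ {p : Ω × ℝ | p.2 ∈ Icc 0 T}ᶜ) :=
        measure_mono hsub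
    _ ≤ δ (A ×ˢ Icc 0 T) + δ {p : Ω × ℝ | p.2 ∈ Icc 0 T}ᶜ := measure_union_le _ _
    _ = δ (A ×ˢ Icc 0 T) := by rw [hδ.2.2.1, add_zero]

lemma ae_notbad (hδ : IsDistST P F T δ) [IsProbabilityMeasure P] :
    ∀ᵐ ω ∂P, ω ∉ badN P F T δ := by
  rw [ae_iff]
  simpa using badN_null (P := P) (F := F) (T := T) hδ

lemma rhoE_ae (hδ : IsDistST P F T δ) (hUC : UsualConditions P F T)
    [IsProbabilityMeasure P] {t : ℝ} (ht : t ∈ Icc 0 T) :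
    rhoE P F T δ t =ᵐ[P] (secMeas δ t).rnDeriv P := by
  haveI := hδ.1
  rcases eq_or_lt_of_le ht.2 with hEq | hlt
  · subst hEq
    have hsec : secMeas δ t = P := Measure.ext fun A hA => by
      rw [secMeas_apply t hA, prod_IccT_apply hδ hA]
    rw [hsec]
    filter_upwards [Measure.rnDeriv_self P] with ω h
    rw [h, rhoE_of_ge le_rfl]
  · have hge : (secMeas δ t).rnDeriv P ≤ᵐ[P] rhoE P F T δ t := by
      have h1 : ∀ᵐ ω ∂P, ∀ q : ℚ, t < (q:ℝ) → (q:ℝ) ≤ T →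
          (secMeas δ t).rnDeriv P ω ≤ gsel P F δ (q:ℝ) ω := by
        rw [ae_all_iff]
        intro q
        by_cases hc : t < (q:ℝ) ∧ (q:ℝ) ≤ T
        · have hqI : (q:ℝ) ∈ Icc 0 T := ⟨le_of_lt (lt_of_le_of_lt ht.1 hc.1), hc.2⟩
          filter_upwards [rn_mono hδ hc.1.le, gsel_ae hδ hqI] with ω e1 e2 _ _
          rw [e2]
          exact e1
        · filter_upwards with ω hq1 hq2
          exact absurd ⟨hq1, hq2⟩ hc
      filter_upwards [h1, rn_le_one hδ t, ae_notbad hδ] with ω hq hle hnb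
      rw [rhoE, if_neg hnb]
      exact le_min hle (le_iInf fun q => hq q.1 q.2.1 q.2.2)
    have hex : ∀ n : ℕ, ∃ q : ℚ, t < (q:ℝ) ∧ (q:ℝ) < min (t + 1/(n+1)) T := by
      intro n
      have hpos : (0:ℝ) < 1/(n+1) := by positivity
      exact exists_rat_btwn (lt_min (by linarith) hlt)
    choose qs hqs1 hqs2 using hex
    have hint : ∫⁻ ω, rhoE P F T δ t ω ∂P ≤ δ (univ ×ˢ Icc 0 t) := by
      have hbound : ∀ n : ℕ, ∫⁻ ω, rhoE P F T δ t ω ∂P ≤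
          δ (univ ×ˢ Icc 0 t) + δ (univ ×ˢ Ioc t (t + 1/(n+1))) := by
        intro n
        have hq1 := hqs1 n
        have hqT : ((qs n : ℚ):ℝ) ≤ T := (lt_of_lt_of_le (hqs2 n) (min_le_right _ _)).le
        have hqe : ((qs n : ℚ):ℝ) ≤ t + 1/(n+1) :=
          (lt_of_lt_of_le (hqs2 n) (min_le_left _ _)).le
        have hle2 : rhoE P F T δ t ≤ᵐ[P] gsel P F δ ((qs n : ℚ):ℝ) := by
          filter_upwards [ae_notbad hδ] with ω hnb
          rw [rhoE, if_neg hnb]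
          exact le_trans (min_le_right _ _) (iInf_le_of_le ⟨qs n, hq1, hqT⟩ le_rfl)
        calc ∫⁻ ω, rhoE P F T δ t ω ∂P ≤ ∫⁻ ω, gsel P F δ ((qs n : ℚ):ℝ) ω ∂P :=
              lintegral_mono_ae hle2
          _ = ∫⁻ ω, (secMeas δ ((qs n : ℚ):ℝ)).rnDeriv P ω ∂P :=
              lintegral_congr_ae (gsel_ae hδ ⟨le_of_lt (lt_of_le_of_lt ht.1 hq1), hqT⟩)
          _ = δ (univ ×ˢ Icc 0 ((qs n : ℚ):ℝ)) := by
              rw [← setLIntegral_univ, setl_rn hδ _ MeasurableSet.univ]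
          _ ≤ δ (univ ×ˢ Icc 0 t) + δ (univ ×ˢ Ioc t (t + 1/(n+1))) := by
              refine le_trans (measure_mono ?_) (measure_union_le _ _)
              intro p hp
              rcases le_or_gt p.2 t with h | h
              · exact Or.inl ⟨trivial, hp.2.1, h⟩
              · exact Or.inr ⟨trivial, h, le_trans hp.2.2 hqe⟩
      have hiInf : (⨅ n : ℕ, δ ((univ : Set Ω) ×ˢ Ioc t (t + 1/(n+1)))) = 0 := by
        have hanti : Antitone (fun n : ℕ => (univ : Set Ω) ×ˢ Ioc t (t + 1/(n+1))) := by
          intro m n hmn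
          refine prod_mono_right (Ioc_subset_Ioc le_rfl ?_)
          have h1 : (1:ℝ)/(n+1) ≤ 1/(m+1) := by
            apply one_div_le_one_div_of_le
            · positivity
            · have : (m:ℝ) ≤ n := Nat.cast_le.2 hmn
              linarith
          linarith
        have hint2 := hanti.measure_iInter (μ := δ)
          (fun n => (MeasurableSet.univ.prod measurableSet_Ioc).nullMeasurableSet)
          ⟨0, measure_ne_top δ _⟩
        rw [← hint2]
        have hempty : (⋂ n : ℕ, (univ : Set Ω) ×ˢ Ioc t (t + 1/(n+1))) = ∅ := by
          ext p
          simp only [mem_iInter, mem_prod, mem_univ, true_and, mem_Ioc,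
            mem_empty_iff_false, iff_false, not_forall]
          by_contra hcon
          push_neg at hcon
          obtain ⟨n, hn⟩ := exists_nat_one_div_lt (show (0:ℝ) < p.2 - t by
            linarith [(hcon 0).1])
          exact absurd ((hcon n).2) (by push_neg; linarith [hn])
        rw [hempty, measure_empty]
      have hle3 : ∫⁻ ω, rhoE P F T δ t ω ∂P ≤
          δ (univ ×ˢ Icc 0 t) + ⨅ n : ℕ, δ ((univ : Set Ω) ×ˢ Ioc t (t + 1/(n+1))) := by
        rw [ENNReal.add_iInf]
        exact le_iInf fun n => hbound n
      rwa [hiInf, add_zero] at hle3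
    have hfin : ∫⁻ ω, (secMeas δ t).rnDeriv P ω ∂P ≠ ⊤ := by
      rw [← setLIntegral_univ, setl_rn hδ _ MeasurableSet.univ]
      exact measure_ne_top δ _
    have hmeasg : AEMeasurable (rhoE P F T δ t) P :=
      ((rhoE_meas hδ hUC ht).mono (hUC.2.1 t) le_rfl).aemeasurable
    have hintle : ∫⁻ ω, rhoE P F T δ t ω ∂P ≤ ∫⁻ ω, (secMeas δ t).rnDeriv P ω ∂P := by
      rw [← setLIntegral_univ (fun ω => (secMeas δ t).rnDeriv P ω), setl_rn hδ _ MeasurableSet.univ]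
      exact hint
    exact (ae_eq_of_ae_le_of_lintegral_le hge hfin hmeasg hintle).symm

lemma rho_isRandDist (hδ : IsDistST P F T δ) (hUC : UsualConditions P F T)
    [IsProbabilityMeasure P] : IsRandDist P T (rho P F T δ) δ := by
  intro A hA t ht
  have h1 : ∀ ω, ENNReal.ofReal (rho P F T δ t ω) = rhoE P F T δ t ω := fun ω =>
    ENNReal.ofReal_toReal (rhoE_ne_top t ω)
  calc δ (A ×ˢ Icc 0 t) = ∫⁻ ω in A, (secMeas δ t).rnDeriv P ω ∂P := (setl_rn hδ t hA).symm
    _ = ∫⁻ ω in A, rhoE P F T δ t ω ∂P :=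
        lintegral_congr_ae (ae_restrict_of_ae (rhoE_ae hδ hUC ht).symm)
    _ = ∫⁻ ω in A, ENNReal.ofReal (rho P F T δ t ω) ∂P := by simp_rw [h1]

lemma rho_isRandomized (hδ : IsDistST P F T δ) (hUC : UsualConditions P F T)
    [IsProbabilityMeasure P] : IsRandomizedST F T (rho P F T δ) := by
  refine ⟨fun t ht => rho_meas hδ hUC ht, fun t _ ω => ⟨rho_nonneg t ω, rho_le_one t ω⟩,
    fun ω => (rho_mono ω).monotoneOn _, fun ω t ht => rho_cwa ω ht, fun ω => rho_of_ge le_rfl ω⟩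


lemma rho_unique (hδ : IsDistST P F T δ) (hUC : UsualConditions P F T)
    [IsProbabilityMeasure P] (ρ' : ℝ → Ω → ℝ) (h1 : IsRandomizedST F T ρ')
    (h2 : IsRandDist P T ρ' δ) :
    ∀ᵐ ω ∂P, ∀ t ∈ Icc (0:ℝ) T, rho P F T δ t ω = ρ' t ω := by
  have key : ∀ t ∈ Icc (0:ℝ) T, ∀ᵐ ω ∂P, rho P F T δ t ω = ρ' t ω := by
    intro t ht
    have hae : (fun ω => ENNReal.ofReal (rho P F T δ t ω)) =ᵐ[P]
        (fun ω => ENNReal.ofReal (ρ' t ω)) := by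
      refine ae_eq_of_forall_setLIntegral_eq_of_sigmaFinite
        (ENNReal.measurable_ofReal.comp ((rho_meas hδ hUC ht).mono (hUC.2.1 t) le_rfl))
        (ENNReal.measurable_ofReal.comp ((h1.1 t ht).mono (hUC.2.1 t) le_rfl))
        fun A hA _ => ?_
      rw [show (∫⁻ ω in A, (fun ω => ENNReal.ofReal (rho P F T δ t ω)) ω ∂P) =
          ∫⁻ ω in A, ENNReal.ofReal (rho P F T δ t ω) ∂P from rfl,
        ← rho_isRandDist hδ hUC A hA t ht, h2 A hA t ht]
    filter_upwards [hae] with ω h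
    exact (ENNReal.ofReal_eq_ofReal_iff (rho_nonneg t ω) (h1.2.1 t ht ω).1).1 h
  have hqs : ∀ᵐ ω ∂P, ∀ q : ℚ, (q:ℝ) ∈ Icc 0 T → rho P F T δ (q:ℝ) ω = ρ' (q:ℝ) ω := by
    rw [ae_all_iff]
    intro q
    by_cases hq : (q:ℝ) ∈ Icc 0 T
    · filter_upwards [key (q:ℝ) hq] with ω h _
      exact h
    · filter_upwards with ω hq2
      exact absurd hq2 hq
  filter_upwards [hqs] with ω hω
  intro t ht
  rcases eq_or_lt_of_le ht.2 with hEq | hlt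
  · subst hEq
    rw [rho_of_ge le_rfl, h1.2.2.2.2 ω]
  · have hc1 : ContinuousWithinAt (fun s => rho P F T δ s ω) (Icc t T) t :=
      rho_cwa ω ⟨ht.1, hlt⟩
    have hc2 := h1.2.2.2.1 ω t ⟨ht.1, hlt⟩
    have hex : ∀ n : ℕ, ∃ q : ℚ, t < (q:ℝ) ∧ (q:ℝ) < min (t + 1/(n+1)) T := by
      intro n
      have hpos : (0:ℝ) < 1/(n+1) := by positivity
      exact exists_rat_btwn (lt_min (by linarith) hlt)
    choose qs hqs1 hqs2 using hex
    have htT : ∀ n, ((qs n : ℚ):ℝ) ≤ T := fun n =>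
      (lt_of_lt_of_le (hqs2 n) (min_le_right _ _)).le
    have htend : Filter.Tendsto (fun n : ℕ => ((qs n : ℚ):ℝ)) Filter.atTop
        (nhdsWithin t (Icc t T)) := by
      rw [tendsto_nhdsWithin_iff]
      constructor
      · have h2t : Filter.Tendsto (fun n : ℕ => t + 1/(n+1 : ℝ)) Filter.atTop (nhds t) := by
          have h0 : Filter.Tendsto (fun _ : ℕ => t) Filter.atTop (nhds t) := tendsto_const_nhds
          simpa using h0.add tendsto_one_div_add_atTop_nhds_zero_nat
        exact tendsto_of_tendsto_of_tendsto_of_le_of_le tendsto_const_nhds h2t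
          (fun n => (hqs1 n).le)
          (fun n => (lt_of_lt_of_le (hqs2 n) (min_le_left _ _)).le)
      · exact Filter.Eventually.of_forall fun n => ⟨(hqs1 n).le, htT n⟩
    have t1 : Filter.Tendsto (fun n => rho P F T δ ((qs n : ℚ):ℝ) ω) Filter.atTop
        (nhds (rho P F T δ t ω)) := hc1.tendsto.comp htend
    have t2 : Filter.Tendsto (fun n => ρ' ((qs n : ℚ):ℝ) ω) Filter.atTop
        (nhds (ρ' t ω)) := hc2.tendsto.comp htend
    have heqn : ∀ n, rho P F T δ ((qs n : ℚ):ℝ) ω = ρ' ((qs n : ℚ):ℝ) ω := fun n =>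
      hω (qs n) ⟨le_of_lt (lt_of_le_of_lt ht.1 (hqs1 n)), htT n⟩
    simp only [heqn] at t1
    exact tendsto_nhds_unique t1 t2


lemma cm_mem (hT : 0 ≤ T) (ω : Ω) (r : ℝ) :
    candidateMixed T (rho P F T δ) ω r ∈ Icc 0 T := by
  rw [candidateMixed]
  by_cases hS : {t | t ∈ Icc 0 T ∧ r ≤ rho P F T δ t ω}.Nonempty
  · constructor
    · exact le_csInf hS fun x hx => hx.1.1
    · obtain ⟨x, hx⟩ := hS
      exact le_trans (csInf_le ⟨0, fun y hy => hy.1.1⟩ hx) hx.1.2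
  · rw [not_nonempty_iff_eq_empty.1 hS, Real.sInf_empty]
    exact ⟨le_rfl, hT⟩

lemma cm_le_iff (hT : 0 ≤ T) {t : ℝ} (ht : t ∈ Icc 0 T) (ω : Ω) (r : ℝ) :
    candidateMixed T (rho P F T δ) ω r ≤ t ↔ r ≤ rho P F T δ t ω ∨ 1 < r := by
  rw [candidateMixed]
  by_cases hr : r ≤ 1
  · have hTS : T ∈ {s | s ∈ Icc 0 T ∧ r ≤ rho P F T δ s ω} :=
      ⟨⟨hT, le_rfl⟩, by rw [rho_of_ge le_rfl]; exact hr⟩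
    constructor
    · intro hinf
      refine Or.inl ?_
      rcases eq_or_lt_of_le ht.2 with hEq | hlt
      · subst hEq
        rw [rho_of_ge le_rfl]
        exact hr
      · by_contra hcon
        push_neg at hcon
        have hε : 0 < r - rho P F T δ t ω := by linarith
        obtain ⟨u, hu1, hu2, hu3⟩ := rho_eps (P := P) (F := F) (δ := δ) ht.1 hlt ω hε
        have hbdd : BddBelow {s | s ∈ Icc 0 T ∧ r ≤ rho P F T δ s ω} :=
          ⟨0, fun y hy => hy.1.1⟩
        have hlt2 : sInf {s | s ∈ Icc 0 T ∧ r ≤ rho P F T δ s ω} < u :=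
          lt_of_le_of_lt hinf hu1
        obtain ⟨sv, hsS, hsu⟩ := (csInf_lt_iff hbdd ⟨T, hTS⟩).1 hlt2
        have : r ≤ rho P F T δ u ω := le_trans hsS.2 (rho_mono ω hsu.le)
        linarith
    · rintro (h | h)
      · exact csInf_le ⟨0, fun y hy => hy.1.1⟩ ⟨ht, h⟩
      · linarith
  · push_neg at hr
    have hS : {s | s ∈ Icc 0 T ∧ r ≤ rho P F T δ s ω} = ∅ := by
      ext sv
      simp only [mem_setOf_eq, mem_empty_iff_false, iff_false, not_and]
      intro hs1
      have := rho_le_one (P := P) (F := F) (T := T) (δ := δ) sv ω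
      push_neg
      linarith
    rw [hS, Real.sInf_empty]
    simp only [ht.1, true_iff]
    exact Or.inr hr

end AuxLemmas

lemma helper_prod_le {α : Type*} {m : MeasurableSpace α} {φ : α → ℝ}
    (hφ : Measurable[m] φ) :
    MeasurableSet[m.prod (borel ℝ)] {p : α × ℝ | p.2 ≤ φ p.1} := by
  letI := m
  exact measurableSet_le measurable_snd (hφ.comp measurable_fst)

lemma helper_prod_gt {α : Type*} {m : MeasurableSpace α} :
    MeasurableSet[m.prod (borel ℝ)] {p : α × ℝ | 1 < p.2} := by
  letI := m
  have : {p : α × ℝ | 1 < p.2} = Prod.snd ⁻¹' Ioi 1 := rfl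
  rw [this]
  exact measurable_snd measurableSet_Ioi

section AuxLemmas2

variable {P : Measure Ω} {F : ℝ → MeasurableSpace Ω} {T : ℝ} {δ : Measure (Ω × ℝ)}

lemma cm_measSet (hδ : IsDistST P F T δ) (hUC : UsualConditions P F T)
    (hT : 0 ≤ T) [IsProbabilityMeasure P] {t : ℝ} (ht : t ∈ Icc 0 T) :
    MeasurableSet[(F t).prod (borel ℝ)]
      {p : Ω × ℝ | candidateMixed T (rho P F T δ) p.1 p.2 ≤ t} := by
  have hset : {p : Ω × ℝ | candidateMixed T (rho P F T δ) p.1 p.2 ≤ t}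
      = {p : Ω × ℝ | p.2 ≤ rho P F T δ t p.1} ∪ {p : Ω × ℝ | 1 < p.2} := by
    ext p
    simp only [mem_setOf_eq, mem_union]
    exact cm_le_iff hT ht p.1 p.2
  rw [hset]
  exact (helper_prod_le (rho_meas hδ hUC ht)).union helper_prod_gt

lemma prod_mono_left' {α β : Type*} {m1 m2 : MeasurableSpace α} (m' : MeasurableSpace β)
    (h : m1 ≤ m2) : m1.prod m' ≤ m2.prod m' :=
  sup_le_sup (MeasurableSpace.comap_mono h) le_rfl

lemma lam_univ : lam (univ : Set ℝ) = 1 := by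
  rw [lam, Measure.restrict_apply_univ, Real.volume_Icc]
  simp

instance inst_s9 : IsFiniteMeasure lam := ⟨by rw [lam_univ]; exact ENNReal.one_lt_top⟩

lemma cm_fun_meas (hδ : IsDistST P F T δ) (hUC : UsualConditions P F T)
    (hT : 0 ≤ T) [IsProbabilityMeasure P] :
    Measurable fun p : Ω × ℝ => candidateMixed T (rho P F T δ) p.1 p.2 := by
  have hIic : ∀ t : ℝ,
      MeasurableSet {p : Ω × ℝ | candidateMixed T (rho P F T δ) p.1 p.2 ≤ t} := by
    intro t
    rcases lt_or_ge t 0 with h | h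
    · have he : {p : Ω × ℝ | candidateMixed T (rho P F T δ) p.1 p.2 ≤ t} = ∅ := by
        ext p
        simp only [mem_setOf_eq, mem_empty_iff_false, iff_false, not_le]
        exact lt_of_lt_of_le h (cm_mem hT p.1 p.2).1
      rw [he]
      exact MeasurableSet.empty
    rcases le_or_gt T t with h2 | h2
    · have he : {p : Ω × ℝ | candidateMixed T (rho P F T δ) p.1 p.2 ≤ t} = univ := by
        ext p
        simp only [mem_setOf_eq, mem_univ, iff_true]
        exact le_trans (cm_mem hT p.1 p.2).2 h2
      rw [he]
      exact MeasurableSet.univ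
    · have hm := cm_measSet hδ hUC hT ⟨h, h2.le⟩
      have hle : (F t).prod (borel ℝ) ≤ Prod.instMeasurableSpace :=
        prod_mono_left' (borel ℝ) (hUC.2.1 t)
      exact hle _ hm
  have hEq : Real.measurableSpace
      = MeasurableSpace.generateFrom (range Iic) := borel_eq_generateFrom_Iic ℝ
  have key : @Measurable (Ω × ℝ) ℝ _ (MeasurableSpace.generateFrom (range Iic))
      (fun p => candidateMixed T (rho P F T δ) p.1 p.2) := by
    refine measurable_generateFrom fun s hs => ?_
    obtain ⟨x, rfl⟩ := hs
    exact hIic x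
  rw [measurable_iff_comap_le]
  conv_lhs => rw [hEq]
  exact measurable_iff_comap_le.1 key

lemma mixed_map_meas (hδ : IsDistST P F T δ) (hUC : UsualConditions P F T)
    (hT : 0 ≤ T) [IsProbabilityMeasure P] :
    Measurable fun p : Ω × ℝ => (p.1, candidateMixed T (rho P F T δ) p.1 p.2) :=
  measurable_fst.prodMk (cm_fun_meas hδ hUC hT)

lemma mixed_rect (hδ : IsDistST P F T δ) (hUC : UsualConditions P F T)
    (hT : 0 ≤ T) [IsProbabilityMeasure P] {A : Set Ω} (hA : MeasurableSet A)
    {t : ℝ} (ht : t ∈ Icc 0 T) :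
    mixedDist P (candidateMixed T (rho P F T δ)) (A ×ˢ Icc 0 t) = δ (A ×ˢ Icc 0 t) := by
  rw [mixedDist, Measure.map_apply (mixed_map_meas hδ hUC hT) (hA.prod measurableSet_Icc)]
  have hpre : (fun p : Ω × ℝ => (p.1, candidateMixed T (rho P F T δ) p.1 p.2)) ⁻¹'
      (A ×ˢ Icc 0 t) = {p : Ω × ℝ | p.1 ∈ A ∧ candidateMixed T (rho P F T δ) p.1 p.2 ≤ t} := by
    ext p
    simp only [mem_preimage, mem_prod, mem_setOf_eq, mem_Icc]
    exact ⟨fun h => ⟨h.1, h.2.2⟩, fun h => ⟨h.1, (cm_mem hT p.1 p.2).1, h.2⟩⟩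
  rw [hpre]
  have hmeas_set : MeasurableSet {p : Ω × ℝ | p.1 ∈ A ∧
      candidateMixed T (rho P F T δ) p.1 p.2 ≤ t} := by
    have : {p : Ω × ℝ | p.1 ∈ A ∧ candidateMixed T (rho P F T δ) p.1 p.2 ≤ t}
        = Prod.fst ⁻¹' A ∩ {p : Ω × ℝ | candidateMixed T (rho P F T δ) p.1 p.2 ≤ t} := rfl
    rw [this]
    exact (measurable_fst hA).inter (cm_fun_meas hδ hUC hT measurableSet_Iic)
  rw [Measure.prod_apply hmeas_set]
  have hsec : (fun ω => lam (Prod.mk ω ⁻¹' {p : Ω × ℝ | p.1 ∈ A ∧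
      candidateMixed T (rho P F T δ) p.1 p.2 ≤ t}))
      = A.indicator (fun ω => ENNReal.ofReal (rho P F T δ t ω)) := by
    funext ω
    by_cases hω : ω ∈ A
    · rw [indicator_of_mem hω]
      have hsec2 : Prod.mk ω ⁻¹' {p : Ω × ℝ | p.1 ∈ A ∧
          candidateMixed T (rho P F T δ) p.1 p.2 ≤ t} = Iic (rho P F T δ t ω) ∪ Ioi 1 := by
        ext r
        simp only [mem_preimage, mem_setOf_eq, hω, true_and, mem_union, mem_Iic, mem_Ioi]
        exact cm_le_iff hT ht ω r
      rw [hsec2, lam, Measure.restrict_apply ((measurableSet_Iic).union measurableSet_Ioi)]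
      have hinter : (Iic (rho P F T δ t ω) ∪ Ioi 1) ∩ Icc 0 1 = Icc 0 (rho P F T δ t ω) := by
        ext r
        simp only [mem_inter_iff, mem_union, mem_Iic, mem_Ioi, mem_Icc]
        constructor
        · rintro ⟨h1 | h1, h2, h3⟩
          · exact ⟨h2, h1⟩
          · linarith
        · rintro ⟨h1, h2⟩
          exact ⟨Or.inl h2, h1, le_trans h2 (rho_le_one t ω)⟩
      rw [hinter, Real.volume_Icc, sub_zero]
    · rw [indicator_of_notMem hω]
      have hsec2 : Prod.mk ω ⁻¹' {p : Ω × ℝ | p.1 ∈ A ∧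
          candidateMixed T (rho P F T δ) p.1 p.2 ≤ t} = ∅ := by
        ext r
        simp [hω]
      rw [hsec2, measure_empty]
  rw [hsec, lintegral_indicator hA]
  exact (rho_isRandDist hδ hUC A hA t ht).symm

lemma mixed_null (hδ : IsDistST P F T δ) (hUC : UsualConditions P F T)
    (hT : 0 ≤ T) [IsProbabilityMeasure P] :
    mixedDist P (candidateMixed T (rho P F T δ)) {p : Ω × ℝ | p.2 ∈ Icc 0 T}ᶜ = 0 := by
  have hms : MeasurableSet ({p : Ω × ℝ | p.2 ∈ Icc 0 T}ᶜ) :=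
    (measurable_snd measurableSet_Icc).compl
  rw [mixedDist, Measure.map_apply (mixed_map_meas hδ hUC hT) hms]
  have : (fun p : Ω × ℝ => (p.1, candidateMixed T (rho P F T δ) p.1 p.2)) ⁻¹'
      {p : Ω × ℝ | p.2 ∈ Icc 0 T}ᶜ = ∅ := by
    ext p
    simp only [mem_preimage, mem_compl_iff, mem_setOf_eq, mem_empty_iff_false, iff_false,
      not_not]
    exact cm_mem hT p.1 p.2
  rw [this, measure_empty]

lemma meas_inter_good {m : Measure (Ω × ℝ)}
    (hnull : m {p : Ω × ℝ | p.2 ∈ Icc 0 T}ᶜ = 0) (s : Set (Ω × ℝ)) :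
    m s = m (s ∩ {p : Ω × ℝ | p.2 ∈ Icc 0 T}) := by
  refine le_antisymm ?_ (measure_mono inter_subset_left)
  calc m s ≤ m ((s ∩ {p : Ω × ℝ | p.2 ∈ Icc 0 T}) ∪ {p : Ω × ℝ | p.2 ∈ Icc 0 T}ᶜ) := by
        refine measure_mono fun p hp => ?_
        by_cases h : p ∈ {p : Ω × ℝ | p.2 ∈ Icc 0 T}
        · exact Or.inl ⟨hp, h⟩
        · exact Or.inr h
    _ ≤ m (s ∩ {p : Ω × ℝ | p.2 ∈ Icc 0 T}) + m {p : Ω × ℝ | p.2 ∈ Icc 0 T}ᶜ :=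
        measure_union_le _ _
    _ = m (s ∩ {p : Ω × ℝ | p.2 ∈ Icc 0 T}) := by rw [hnull, add_zero]

lemma mixed_eq (hδ : IsDistST P F T δ) (hUC : UsualConditions P F T)
    (hT : 0 ≤ T) [IsProbabilityMeasure P] :
    mixedDist P (candidateMixed T (rho P F T δ)) = δ := by
  haveI := hδ.1
  haveI hlamP : IsProbabilityMeasure lam := ⟨lam_univ⟩
  set ν := mixedDist P (candidateMixed T (rho P F T δ)) with hν
  haveI : IsProbabilityMeasure ν := by
    rw [hν, mixedDist]
    exact Measure.isProbabilityMeasure_map (mixed_map_meas hδ hUC hT).aemeasurable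
  have hνnull : ν {p : Ω × ℝ | p.2 ∈ Icc 0 T}ᶜ = 0 := mixed_null hδ hUC hT
  have hrect : ∀ A : Set Ω, MeasurableSet A → ∀ t : ℝ, t ∈ Icc 0 T →
      ν (A ×ˢ Icc 0 t) = δ (A ×ˢ Icc 0 t) := fun A hA t ht => mixed_rect hδ hUC hT hA ht
  have hAB : ∀ A : Set Ω, MeasurableSet A → ∀ B : Set ℝ, MeasurableSet B →
      ν (A ×ˢ B) = δ (A ×ˢ B) := by
    intro A hA
    have hIicEq : ∀ x : ℝ, ν (A ×ˢ Iic x) = δ (A ×ˢ Iic x) := by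
      intro x
      have hgood : ∀ m : Measure (Ω × ℝ), m {p : Ω × ℝ | p.2 ∈ Icc 0 T}ᶜ = 0 →
          m (A ×ˢ Iic x) = m (A ×ˢ (Iic x ∩ Icc 0 T)) := by
        intro m hm
        rw [meas_inter_good hm]
        congr 1
        ext p
        simp only [mem_inter_iff, mem_prod, mem_Iic, mem_setOf_eq, mem_Icc]
        tauto
      rw [hgood ν hνnull, hgood δ hδ.2.2.1]
      rcases lt_or_ge x 0 with hx | hx
      · have he : Iic x ∩ Icc 0 T = ∅ := by
          ext r
          simp only [mem_inter_iff, mem_Iic, mem_Icc, mem_empty_iff_false, iff_false, not_and]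
          intro h1
          push_neg
          intro h2
          linarith
        rw [he]
        simp
      · have he : Iic x ∩ Icc 0 T = Icc 0 (min x T) := by
          ext r
          simp only [mem_inter_iff, mem_Iic, mem_Icc, le_min_iff]
          tauto
        rw [he]
        exact hrect A hA _ ⟨le_min hx hT, min_le_right _ _⟩
    set m1 := (ν.restrict (A ×ˢ (univ : Set ℝ))).map Prod.snd with hm1def
    set m2 := (δ.restrict (A ×ˢ (univ : Set ℝ))).map Prod.snd with hm2def
    have happ : ∀ (m : Measure (Ω × ℝ)) (B : Set ℝ), MeasurableSet B →
        (m.restrict (A ×ˢ (univ : Set ℝ))).map Prod.snd B = m (A ×ˢ B) := by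
      intro m B hB
      rw [Measure.map_apply measurable_snd hB,
        Measure.restrict_apply (hB.preimage measurable_snd)]
      congr 1
      ext p
      simp only [mem_inter_iff, mem_preimage, mem_prod, mem_univ, and_true, mem_setOf_eq]
      tauto
    haveI : IsFiniteMeasure m1 := by
      constructor
      rw [hm1def, happ ν univ MeasurableSet.univ]
      exact measure_lt_top _ _
    have hm12 : m1 = m2 := by
      refine Measure.ext_of_Iic m1 m2 fun x => ?_
      rw [hm1def, hm2def, happ ν _ measurableSet_Iic, happ δ _ measurableSet_Iic]
      exact hIicEq x
    intro B hB
    rw [← happ ν B hB, ← happ δ B hB, ← hm1def, ← hm2def, hm12]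
  refine ext_of_generate_finite _ generateFrom_prod.symm isPiSystem_prod ?_ ?_
  · rintro s ⟨A, hA, B, hB, rfl⟩
    exact hAB A hA B hB
  · rw [measure_univ, measure_univ]


end AuxLemmas2



/-- Under the usual conditions, every distribution stopping time is equivalent to
a unique (up to indistinguishability) randomized stopping time and to at least
one mixed stopping time. -/
theorem stmt9 (P : Measure Ω) [IsProbabilityMeasure P]
    (F : ℝ → MeasurableSpace Ω) (T : ℝ) (hT : 0 ≤ T)
    (hUC : UsualConditions P F T)
    (δ : Measure (Ω × ℝ)) (hδ : IsDistST P F T δ) :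
    (∃ ρ : ℝ → Ω → ℝ, (IsRandomizedST F T ρ ∧ IsRandDist P T ρ δ) ∧
      ∀ ρ' : ℝ → Ω → ℝ, IsRandomizedST F T ρ' → IsRandDist P T ρ' δ →
        ∀ᵐ ω ∂P, ∀ t ∈ Icc (0:ℝ) T, ρ t ω = ρ' t ω) ∧
    (∃ μ : Ω → ℝ → ℝ, IsMixedST F T μ ∧ mixedDist P μ = δ) := by
  exact ⟨⟨rho P F T δ, ⟨rho_isRandomized hδ hUC, rho_isRandDist hδ hUC⟩,
    fun ρ' h1 h2 => rho_unique hδ hUC ρ' h1 h2⟩,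
    ⟨candidateMixed T (rho P F T δ),
      ⟨fun ω r => cm_mem hT ω r, fun t ht => cm_measSet hδ hUC hT ht⟩,
      mixed_eq hδ hUC hT⟩⟩
end StopEquiv
end
end

section
/- Let δ be a distribution stopping time and ρ the unique randomized stopping time with δ_ρ = δ. Then for every bounded jointly measurable payoff process R = (R_t)_{t∈[0,T]}, E_δ[R_t(ω)] = E_P[∫_0^T R_t(ω) dρ_t(ω)], where the inner integral is the Lebesgue–Stieltjes integral with respect to the nondecreasing path t ↦ ρ_t(ω). -/
open MeasureTheory Set

noncomputable section

namespace StopEquiv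

variable {Ω : Type*} [MeasurableSpace Ω]

/-- If `δ` is a distribution stopping time and `ρ` the randomized stopping time
with `δ_ρ = δ`, then for every bounded measurable payoff process `R`,
`E_δ[R_t(ω)] = E_P[∫_0^T R_t(ω) dρ_t(ω)]`, where the inner Lebesgue–Stieltjes
integral is taken w.r.t. the measure `ν_ω` of the nondecreasing path `t ↦ ρ_t(ω)`
(characterized by `ν_ω([0,t]) = ρ_t(ω)` and `ν_ω([0,T]ᶜ) = 0`). -/
theorem stmt11 (P : Measure Ω) [IsProbabilityMeasure P]
    (F : ℝ → MeasurableSpace Ω) (T : ℝ) (hT : 0 ≤ T)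
    (hUC : UsualConditions P F T)
    (δ : Measure (Ω × ℝ)) (hδ : IsDistST P F T δ)
    (ρ : ℝ → Ω → ℝ) (hρ : IsRandomizedST F T ρ) (hρδ : IsRandDist P T ρ δ)
    (ν : ProbabilityTheory.Kernel Ω ℝ)
    (hν1 : ∀ ω, ∀ t ∈ Icc (0:ℝ) T, ν ω (Icc 0 t) = ENNReal.ofReal (ρ t ω))
    (hν2 : ∀ ω, ν ω (Icc (0:ℝ) T)ᶜ = 0)
    (R : Ω × ℝ → ℝ) (hR : Measurable R) (C : ℝ) (hbd : ∀ q, |R q| ≤ C) :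
    ∫ q, R q ∂δ = ∫ ω, (∫ t, R (ω, t) ∂(ν ω)) ∂P := by
  classical
  haveI hδfin : IsProbabilityMeasure δ := hδ.1
  -- ν is a Markov kernel
  have hνprob : ∀ ω, IsProbabilityMeasure (ν ω) := by
    intro ω
    constructor
    have h1 : ν ω (Icc 0 T) = 1 := by
      rw [hν1 ω T ⟨hT, le_refl T⟩, hρ.2.2.2.2 ω]; simp
    have h2 : ν ω (Icc (0:ℝ) T) + ν ω (Icc (0:ℝ) T)ᶜ = ν ω univ :=
      measure_add_measure_compl measurableSet_Icc
    rw [← h2, hν2 ω, h1, add_zero]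
  haveI : ProbabilityTheory.IsMarkovKernel ν := ⟨hνprob⟩
  -- the null set off Ω × [0,T]
  have hnull : δ (univ ×ˢ (Icc (0:ℝ) T)ᶜ) = 0 := by
    have hset : (univ ×ˢ (Icc (0:ℝ) T)ᶜ : Set (Ω × ℝ)) = {p : Ω × ℝ | p.2 ∈ Icc 0 T}ᶜ := by
      ext p; simp
    rw [hset]; exact hδ.2.2.1
  -- key rectangle formula
  have key : ∀ A : Set Ω, MeasurableSet A → ∀ B : Set ℝ, MeasurableSet B →
      δ (A ×ˢ B) = ∫⁻ ω in A, ν ω B ∂P := by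
    intro A hA
    set μ1 : Measure ℝ := (δ.restrict (A ×ˢ univ)).map Prod.snd with hμ1def
    set μ2 : Measure ℝ := (P.restrict A).bind (fun ω => ν ω) with hμ2def
    have hμ1 : ∀ B : Set ℝ, MeasurableSet B → μ1 B = δ (A ×ˢ B) := by
      intro B hB
      rw [hμ1def, Measure.map_apply measurable_snd hB,
        Measure.restrict_apply (measurable_snd hB)]
      congr 1
      ext p; simp [and_comm]
    have hμ2 : ∀ B : Set ℝ, MeasurableSet B → μ2 B = ∫⁻ ω in A, ν ω B ∂P := by
      intro B hB
      rw [hμ2def, Measure.bind_apply hB ν.measurable.aemeasurable]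
    haveI : IsFiniteMeasure μ1 := by
      constructor
      rw [hμ1 univ MeasurableSet.univ]
      exact measure_lt_top _ _
    haveI : IsFiniteMeasure μ2 := by
      constructor
      rw [hμ2 univ MeasurableSet.univ]
      calc ∫⁻ ω in A, ν ω univ ∂P = ∫⁻ _ω in A, 1 ∂P := by
            refine lintegral_congr fun ω => ?_; rw [measure_univ]
        _ = P A := by simp
        _ < ⊤ := measure_lt_top _ _
    have hIic : ∀ a : ℝ, μ1 (Iic a) = μ2 (Iic a) := by
      intro a
      rw [hμ1 _ measurableSet_Iic, hμ2 _ measurableSet_Iic]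
      rcases lt_or_ge a 0 with ha | ha
      · have h1 : δ (A ×ˢ Iic a) = 0 := by
          refine measure_mono_null ?_ hnull
          intro p hp
          exact ⟨mem_univ _, fun h => absurd (le_trans h.1 hp.2) (not_le.2 ha)⟩
        have h2 : ∀ ω, ν ω (Iic a) = 0 := by
          intro ω
          refine measure_mono_null ?_ (hν2 ω)
          intro s hs h's
          exact absurd (le_trans h's.1 hs) (not_le.2 ha)
        rw [h1]
        symm
        simp only [h2]
        simp
      · set a' := min a T with ha'def
        have ha' : a' ∈ Icc (0:ℝ) T := ⟨le_min ha hT, min_le_right _ _⟩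
        have hdiff : Iic a \ Icc 0 a' ⊆ (Icc (0:ℝ) T)ᶜ := by
          intro s hs
          rcases lt_or_ge s 0 with h | h
          · exact fun hc => absurd hc.1 (not_le.2 h)
          · intro hc
            exact hs.2 ⟨h, le_min hs.1 hc.2⟩
        have hsplit : Iic a = Icc 0 a' ∪ (Iic a \ Icc 0 a') := by
          rw [union_diff_cancel]
          intro s hs
          exact le_trans hs.2 (min_le_left _ _)
        have h1 : δ (A ×ˢ Iic a) = δ (A ×ˢ Icc 0 a') := by
          refine le_antisymm ?_ (measure_mono (prod_mono_right (by rw [hsplit]; exact subset_union_left)))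
          have : A ×ˢ Iic a ⊆ (A ×ˢ Icc 0 a') ∪ (univ ×ˢ (Icc (0:ℝ) T)ᶜ) := by
            intro p hp
            by_cases h : p.2 ∈ Icc 0 a'
            · exact Or.inl ⟨hp.1, h⟩
            · exact Or.inr ⟨mem_univ _, hdiff ⟨hp.2, h⟩⟩
          calc δ (A ×ˢ Iic a) ≤ δ ((A ×ˢ Icc 0 a') ∪ (univ ×ˢ (Icc (0:ℝ) T)ᶜ)) := measure_mono this
            _ ≤ δ (A ×ˢ Icc 0 a') + δ (univ ×ˢ (Icc (0:ℝ) T)ᶜ) := measure_union_le _ _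
            _ = δ (A ×ˢ Icc 0 a') := by rw [hnull, add_zero]
        have h2 : ∀ ω, ν ω (Iic a) = ν ω (Icc 0 a') := by
          intro ω
          refine le_antisymm ?_ (measure_mono (by rw [hsplit]; exact subset_union_left))
          calc ν ω (Iic a) ≤ ν ω (Icc 0 a' ∪ (Iic a \ Icc 0 a')) := measure_mono (by rw [← hsplit])
            _ ≤ ν ω (Icc 0 a') + ν ω (Iic a \ Icc 0 a') := measure_union_le _ _
            _ ≤ ν ω (Icc 0 a') + ν ω (Icc (0:ℝ) T)ᶜ :=
                add_le_add le_rfl (measure_mono hdiff)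
            _ = ν ω (Icc 0 a') := by rw [hν2 ω, add_zero]
        rw [h1, hρδ A hA a' ha']
        refine (lintegral_congr fun ω => ?_).symm
        rw [h2 ω, hν1 ω a' ha']
    have hμeq : μ1 = μ2 := Measure.ext_of_Iic μ1 μ2 hIic
    intro B hB
    rw [← hμ1 B hB, hμeq, hμ2 B hB]
  -- δ equals the composition-product P ⊗ₘ ν
  have hδeq : δ = P.compProd ν := by
    refine ext_of_generate_finite _ generateFrom_prod.symm isPiSystem_prod ?_ ?_
    · rintro s ⟨A, hA, B, hB, rfl⟩
      simp only [mem_setOf_eq] at hA hB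
      rw [key A hA B hB, Measure.compProd_apply_prod hA hB]
    · rw [measure_univ, Measure.compProd_apply_univ, measure_univ]
  -- integrability of R
  have hint : Integrable R (P.compProd ν) := by
    refine ⟨hR.aestronglyMeasurable, ?_⟩
    refine HasFiniteIntegral.of_bounded (C := C) ?_
    exact Filter.Eventually.of_forall fun q => by simpa using hbd q
  rw [hδeq, Measure.integral_compProd hint]
end StopEquiv
end
end

section
/- Let μ and ρ be equivalent (δ_μ = δ_ρ) mixed and randomized stopping times respectively. Then for every bounded jointly measurable payoff process R, E_{P⊗λ}[R_{μ(ω,r)}(ω)] = E_P[∫_0^T R_t(ω) dρ_t(ω)]; that is, equivalent random stopping times yield the same payoff in every stopping problem. -/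
open MeasureTheory Set

noncomputable section

namespace StopEquiv

variable {Ω : Type*} [MeasurableSpace Ω]

/-- Equivalent mixed and randomized stopping times yield the same payoff in every
stopping problem: `E_{P⊗λ}[R_{μ(ω,r)}(ω)] = E_P[∫_0^T R_t(ω) dρ_t(ω)]`, where the
inner Lebesgue–Stieltjes integral is w.r.t. the measure `ν_ω` of the path
`t ↦ ρ_t(ω)`. -/
theorem stmt12 (P : Measure Ω) [IsProbabilityMeasure P]
    (F : ℝ → MeasurableSpace Ω)
    (hle : ∀ t : ℝ, F t ≤ (inferInstance : MeasurableSpace Ω))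
    (T : ℝ) (hT : 0 ≤ T)
    (μ : Ω → ℝ → ℝ) (hμ : IsMixedST F T μ)
    (ρ : ℝ → Ω → ℝ) (hρ : IsRandomizedST F T ρ)
    (hequiv : IsRandDist P T ρ (mixedDist P μ))
    (ν : ProbabilityTheory.Kernel Ω ℝ)
    (hν1 : ∀ ω, ∀ t ∈ Icc (0:ℝ) T, ν ω (Icc 0 t) = ENNReal.ofReal (ρ t ω))
    (hν2 : ∀ ω, ν ω (Icc (0:ℝ) T)ᶜ = 0)
    (R : Ω × ℝ → ℝ) (hR : Measurable R) (C : ℝ) (hbd : ∀ q, |R q| ≤ C) :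
    ∫ p : Ω × ℝ, R (p.1, μ p.1 p.2) ∂(P.prod lam)
      = ∫ ω, (∫ t, R (ω, t) ∂(ν ω)) ∂P := by
  classical
  -- measurability of the mixed stopping time on the product space
  have hμm : Measurable (fun p : Ω × ℝ => μ p.1 p.2) := by
    apply measurable_of_Iic
    intro x
    rcases lt_or_ge x 0 with hx | hx
    · have he : (fun p : Ω × ℝ => μ p.1 p.2) ⁻¹' Iic x = ∅ := by
        ext p
        simp only [mem_preimage, mem_Iic, mem_empty_iff_false, iff_false, not_le]
        exact lt_of_lt_of_le hx (hμ.1 p.1 p.2).1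
      rw [he]; exact MeasurableSet.empty
    rcases le_or_gt x T with hxT | hxT
    · have h := hμ.2 x ⟨hx, hxT⟩
      have hb : borel ℝ ≤ (inferInstance : MeasurableSpace ℝ) :=
        le_of_eq (BorelSpace.measurable_eq.symm)
      have hprodle : (F x).prod (borel ℝ) ≤ (inferInstance : MeasurableSpace (Ω × ℝ)) :=
        sup_le_sup (MeasurableSpace.comap_mono (hle x)) (MeasurableSpace.comap_mono hb)
      exact hprodle _ h
    · have he : (fun p : Ω × ℝ => μ p.1 p.2) ⁻¹' Iic x = univ := by
        ext p
        simp only [mem_preimage, mem_Iic, mem_univ, iff_true]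
        exact le_trans (hμ.1 p.1 p.2).2 hxT.le
      rw [he]; exact MeasurableSet.univ
  have hmap : Measurable (fun p : Ω × ℝ => (p.1, μ p.1 p.2)) := measurable_fst.prodMk hμm
  -- lam is a probability measure
  haveI : IsProbabilityMeasure lam := by
    constructor
    rw [lam, Measure.restrict_apply_univ, Real.volume_Icc]
    norm_num
  haveI : IsProbabilityMeasure (mixedDist P μ) :=
    Measure.isProbabilityMeasure_map hmap.aemeasurable
  -- ν is a Markov kernel
  haveI hmk : ProbabilityTheory.IsMarkovKernel ν := by
    constructor
    intro ω
    constructor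
    rw [← measure_add_measure_compl (measurableSet_Icc : MeasurableSet (Icc (0:ℝ) T)),
      hν1 ω T ⟨hT, le_refl T⟩, hν2 ω, add_zero, hρ.2.2.2.2 ω, ENNReal.ofReal_one]
  -- evaluating the mixed distribution via the pushforward
  have hmd : ∀ S : Set (Ω × ℝ), MeasurableSet S →
      mixedDist P μ S = (P.prod lam) ((fun p : Ω × ℝ => (p.1, μ p.1 p.2)) ⁻¹' S) :=
    fun S hS => Measure.map_apply hmap hS
  -- the two measures agree on rectangles A ×ˢ Iic t
  have hrect : ∀ A : Set Ω, MeasurableSet A → ∀ t : ℝ,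
      mixedDist P μ (A ×ˢ Iic t) = (P.compProd ν) (A ×ˢ Iic t) := by
    intro A hA t
    rw [Measure.compProd_apply_prod hA measurableSet_Iic]
    rcases lt_or_ge t 0 with ht | ht
    · have h1 : mixedDist P μ (A ×ˢ Iic t) = 0 := by
        rw [hmd _ (hA.prod measurableSet_Iic)]
        have he : (fun p : Ω × ℝ => (p.1, μ p.1 p.2)) ⁻¹' (A ×ˢ Iic t) = (∅ : Set (Ω × ℝ)) := by
          ext p
          simp only [mem_preimage, mem_prod, mem_Iic, mem_empty_iff_false, iff_false, not_and]
          intro _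
          exact not_le.2 (lt_of_lt_of_le ht (hμ.1 p.1 p.2).1)
        rw [he, measure_empty]
      have hsub : Iic t ⊆ (Icc (0:ℝ) T)ᶜ := by
        intro s hs
        simp only [mem_compl_iff, mem_Icc, not_and]
        intro h0 _
        exact absurd (h0.trans hs) (not_le.2 ht)
      have h2 : ∀ ω, ν ω (Iic t) = 0 := fun ω => measure_mono_null hsub (hν2 ω)
      rw [h1, lintegral_congr h2, lintegral_zero]
    rcases le_or_gt t T with htT | htT
    · -- middle case : 0 ≤ t ≤ T
      have hpre : (fun p : Ω × ℝ => (p.1, μ p.1 p.2)) ⁻¹' (A ×ˢ Iic t)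
          = (fun p : Ω × ℝ => (p.1, μ p.1 p.2)) ⁻¹' (A ×ˢ Icc 0 t) := by
        ext p
        simp only [mem_preimage, mem_prod, mem_Iic, mem_Icc]
        exact ⟨fun h => ⟨h.1, (hμ.1 p.1 p.2).1, h.2⟩, fun h => ⟨h.1, h.2.2⟩⟩
      have h1 : mixedDist P μ (A ×ˢ Iic t) = ∫⁻ ω in A, ENNReal.ofReal (ρ t ω) ∂P := by
        rw [hmd _ (hA.prod measurableSet_Iic), hpre, ← hmd _ (hA.prod measurableSet_Icc)]
        exact hequiv A hA t ⟨ht, htT⟩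
      have h2 : ∀ ω, ν ω (Iic t) = ENNReal.ofReal (ρ t ω) := by
        intro ω
        rw [← hν1 ω t ⟨ht, htT⟩]
        symm
        apply measure_eq_measure_of_null_diff Icc_subset_Iic_self
        apply measure_mono_null _ (hν2 ω)
        intro s hs
        rw [mem_diff, mem_Iic, mem_Icc] at hs
        have hneg : s < 0 := by
          by_contra h
          exact hs.2 ⟨not_lt.1 h, hs.1⟩
        simp only [mem_compl_iff, mem_Icc, not_and]
        exact fun h0 => absurd h0 (not_le.2 hneg)
      rw [h1]
      exact lintegral_congr fun ω => (h2 ω).symm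
    · -- case t > T
      have hpre : (fun p : Ω × ℝ => (p.1, μ p.1 p.2)) ⁻¹' (A ×ˢ Iic t)
          = (fun p : Ω × ℝ => (p.1, μ p.1 p.2)) ⁻¹' (A ×ˢ Icc 0 T) := by
        ext p
        simp only [mem_preimage, mem_prod, mem_Iic, mem_Icc]
        exact ⟨fun h => ⟨h.1, (hμ.1 p.1 p.2).1, (hμ.1 p.1 p.2).2⟩,
          fun h => ⟨h.1, le_trans (hμ.1 p.1 p.2).2 htT.le⟩⟩
      have h1 : mixedDist P μ (A ×ˢ Iic t) = ∫⁻ ω in A, ENNReal.ofReal (ρ T ω) ∂P := by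
        rw [hmd _ (hA.prod measurableSet_Iic), hpre, ← hmd _ (hA.prod measurableSet_Icc)]
        exact hequiv A hA T ⟨hT, le_refl T⟩
      have h2 : ∀ ω, ν ω (Iic t) = ENNReal.ofReal (ρ T ω) := by
        intro ω
        rw [← hν1 ω T ⟨hT, le_refl T⟩]
        symm
        apply measure_eq_measure_of_null_diff (Icc_subset_Iic_self.trans (Iic_subset_Iic.2 htT.le))
        exact measure_mono_null (diff_subset_compl _ _) (hν2 ω)
      rw [h1]
      exact lintegral_congr fun ω => (h2 ω).symm
  -- the measures coincide
  have key : mixedDist P μ = P.compProd ν := by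
    refine ext_of_generate_finite
      (image2 (· ×ˢ ·) {s : Set Ω | MeasurableSet s} (range Iic)) ?_ ?_ ?_ ?_
    · symm
      apply generateFrom_eq_prod MeasurableSpace.generateFrom_measurableSet
        (BorelSpace.measurable_eq.trans (borel_eq_generateFrom_Iic ℝ)).symm
        isCountablySpanning_measurableSet
      refine ⟨fun n => Iic (n : ℝ), fun n => mem_range_self _, ?_⟩
      ext x
      simp only [mem_iUnion, mem_Iic, mem_univ, iff_true]
      exact exists_nat_ge x
    · exact MeasurableSpace.isPiSystem_measurableSet.prod isPiSystem_Iic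
    · rintro _ ⟨A, hA, _, ⟨t, rfl⟩, rfl⟩
      exact hrect A hA t
    · rw [measure_univ, Measure.compProd_apply_univ, measure_univ]
  haveI : IsProbabilityMeasure (P.compProd ν) := by rw [← key]; infer_instance
  have hint : Integrable R (P.compProd ν) :=
    ⟨hR.aestronglyMeasurable, HasFiniteIntegral.of_bounded (C := C)
      (Filter.Eventually.of_forall fun q => by rw [Real.norm_eq_abs]; exact hbd q)⟩
  calc ∫ p : Ω × ℝ, R (p.1, μ p.1 p.2) ∂(P.prod lam)
      = ∫ q, R q ∂(mixedDist P μ) :=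
        (integral_map hmap.aemeasurable hR.aestronglyMeasurable).symm
    _ = ∫ q, R q ∂(P.compProd ν) := by rw [key]
    _ = ∫ ω, ∫ t, R (ω, t) ∂(ν ω) ∂P := Measure.integral_compProd hint
end StopEquiv
end
end
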